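/- arXiv:1607.07283 — 5 statements merged into one kernel-verified Lean document; each statement's English description precedes it below -/
import Mathlib

section
/- Let f : (0,∞) → (0,∞) be continuous, strictly decreasing with f(t) → ∞ as t → 0⁺, and suppose for some 0 < ε < d the function t ↦ t^(d-ε) f(t) is increasing on (0, t_ε]. Then for every r with 0 < 3r < t_ε, the integral ∫_{f(3r)}^{∞} (f⁻¹(u))^d du is finite and bounded above by C · r^d · f(2r), where C is a constant depending only on d and ε. -/
open MeasureTheory Set Filter Topology ENNReal

/-- Let `f : (0,∞) → (0,∞)` be continuous, strictly decreasing, tending to `∞` at `0⁺`, with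
`t ↦ t ^ (d - ε) * f t` increasing on `(0, tε]` for some `0 < ε < d`.  Then for every `r` with
`0 < 3r < tε`, the integral `∫_{f(3r)}^∞ (f⁻¹ u)^d du` is finite and bounded by
`C * r^d * f(2r)`, with `C` depending only on `d` and `ε`. -/
theorem tail_integral_of_inverse_bound (d ε : ℝ) (hε0 : 0 < ε) (hεd : ε < d) :
    ∃ C > (0:ℝ), ∀ (f : ℝ → ℝ) (tε : ℝ), 0 < tε →
      ContinuousOn f (Set.Ioi 0) → StrictAntiOn f (Set.Ioi 0) →
      (∀ t ∈ Set.Ioi (0:ℝ), 0 < f t) →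
      Tendsto f (nhdsWithin 0 (Set.Ioi 0)) atTop →
      MonotoneOn (fun t => t ^ (d - ε) * f t) (Set.Ioc 0 tε) →
      ∀ r : ℝ, 0 < r → 3 * r < tε →
        (∫⁻ u in Set.Ioi (f (3 * r)),
            ENNReal.ofReal ((Function.invFunOn f (Set.Ioi 0) u) ^ d)) ≤
          ENNReal.ofReal (C * r ^ d * f (2 * r)) := by
  have hd0 : 0 < d := hε0.trans hεd
  have hde : 0 < d - ε := sub_pos.mpr hεd
  set p := d / (d - ε) with hp_def
  have hp1 : 1 < p := (one_lt_div hde).mpr (by linarith)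
  have hp0 : 0 < p := by linarith
  refine ⟨3 ^ d * ((d - ε) / ε), by positivity, ?_⟩
  intro f tε htε hcont hanti hfpos htend hmono r hr h3r
  have h3r0 : 0 < 3 * r := by linarith
  set a := f (3 * r) with ha_def
  have ha0 : 0 < a := hfpos _ h3r0
  set A := (3 * r) ^ (d - ε) * a with hA_def
  have hA0 : 0 < A := by positivity
  -- pointwise bound
  have key : ∀ u ∈ Ioi a, (Function.invFunOn f (Set.Ioi 0) u) ^ d ≤ (A / u) ^ p := by
    intro u hu
    have hua : a < u := hu
    have hu0 : 0 < u := ha0.trans hua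
    -- existence of a preimage
    have hex : ∃ t ∈ Set.Ioi (0:ℝ), f t = u := by
      have h1 : ∀ᶠ s in nhdsWithin 0 (Set.Ioi 0), u < f s :=
        htend.eventually_gt_atTop u
      have h2 : Set.Ioo (0:ℝ) (3 * r) ∈ nhdsWithin 0 (Set.Ioi 0) :=
        Ioo_mem_nhdsGT_of_mem ⟨le_refl 0, h3r0⟩
      obtain ⟨s, hs1, hs2⟩ := (h1.and (eventually_of_mem h2 (fun x hx => hx))).exists
      have hsub : Set.Icc s (3 * r) ⊆ Set.Ioi 0 := fun x hx => lt_of_lt_of_le hs2.1 hx.1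
      have := intermediate_value_Ioo' hs2.2.le (hcont.mono hsub)
      obtain ⟨t, ht1, ht2⟩ := this ⟨hua, hs1⟩
      exact ⟨t, hs2.1.trans ht1.1, ht2⟩
    set t := Function.invFunOn f (Set.Ioi 0) u with ht_def
    have ht_mem : t ∈ Set.Ioi (0:ℝ) := Function.invFunOn_mem hex
    have ht0 : 0 < t := ht_mem
    have hft : f t = u := Function.invFunOn_eq hex
    have ht3r : t < 3 * r := by
      have : a < f t := hft ▸ hua
      exact (hanti.lt_iff_gt h3r0 ht_mem).mp this
    -- monotone bound
    have hmb : t ^ (d - ε) * u ≤ A := by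
      have := hmono (a := t) (b := 3 * r) ⟨ht0, by linarith⟩ ⟨h3r0, h3r.le⟩ ht3r.le
      simpa [hft] using this
    have htle : t ^ (d - ε) ≤ A / u := (le_div_iff₀ hu0).mpr hmb
    calc t ^ d = (t ^ (d - ε)) ^ p := by
          rw [← Real.rpow_mul ht0.le]
          congr 1
          rw [hp_def]
          field_simp
      _ ≤ (A / u) ^ p := Real.rpow_le_rpow (Real.rpow_nonneg ht0.le _) htle hp0.le
  -- the dominating function
  have hmeas : Measurable fun u : ℝ => ENNReal.ofReal ((A / u) ^ p) :=
    (((measurable_const.div measurable_id).pow_const p)).ennreal_ofReal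
  have hcongr : ∀ u ∈ Set.Ioi a, (A / u) ^ p = A ^ p * u ^ (-p) := by
    intro u hu
    have hu0 : (0:ℝ) < u := ha0.trans hu
    rw [Real.div_rpow hA0.le hu0.le, Real.rpow_neg hu0.le, div_eq_mul_inv]
  have hint : IntegrableOn (fun u : ℝ => (A / u) ^ p) (Set.Ioi a) := by
    have h1 : IntegrableOn (fun u : ℝ => A ^ p * u ^ (-p)) (Set.Ioi a) :=
      (integrableOn_Ioi_rpow_of_lt (by linarith : -p < -1) ha0).const_mul (A ^ p)
    exact h1.congr_fun (fun u hu => (hcongr u hu).symm) measurableSet_Ioi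
  have hval : ∫ u in Set.Ioi a, (A / u) ^ p = A ^ p * (a ^ (1 - p) / (p - 1)) := by
    rw [setIntegral_congr_fun measurableSet_Ioi hcongr, integral_const_mul,
      integral_Ioi_rpow_of_lt (by linarith : -p < -1) ha0]
    congr 1
    rw [show -p + 1 = 1 - p by ring, show (1 - p : ℝ) = -(p - 1) by ring]
    rw [div_neg, neg_div, neg_neg, Real.rpow_neg ha0.le]
  -- final real bound
  have hfin : A ^ p * (a ^ (1 - p) / (p - 1)) ≤ 3 ^ d * ((d - ε) / ε) * r ^ d * f (2 * r) := by
    have hAp : A ^ p = (3 * r) ^ d * a ^ p := by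
      rw [hA_def, Real.mul_rpow (by positivity) ha0.le, ← Real.rpow_mul (by positivity)]
      congr 2
      rw [hp_def]
      field_simp
    have haa : a ^ p * a ^ (1 - p) = a := by
      rw [← Real.rpow_add ha0]
      simp
    have hpm : p - 1 = ε / (d - ε) := by
      rw [hp_def]
      field_simp
      ring
    have h3rd : (3 * r) ^ d = 3 ^ d * r ^ d := Real.mul_rpow (by norm_num) hr.le
    have hfa : a ≤ f (2 * r) := by
      have : f (3 * r) < f (2 * r) := hanti (by positivity : (0:ℝ) < 2*r) h3r0 (by linarith)
      exact this.le
    have h1 : A ^ p * (a ^ (1 - p) / (p - 1)) = 3 ^ d * ((d - ε) / ε) * r ^ d * a := by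
      rw [hAp, hpm, h3rd, div_div_eq_mul_div]
      have h2 : 3 ^ d * r ^ d * a ^ p * (a ^ (1 - p) * (d - ε) / ε)
          = a ^ p * a ^ (1 - p) * (3 ^ d * r ^ d * (d - ε) / ε) := by ring
      rw [h2, haa]
      ring
    rw [h1]
    have hpos : (0:ℝ) ≤ 3 ^ d * ((d - ε) / ε) * r ^ d := by positivity
    exact mul_le_mul_of_nonneg_left hfa hpos
  calc (∫⁻ u in Set.Ioi a, ENNReal.ofReal ((Function.invFunOn f (Set.Ioi 0) u) ^ d))
      ≤ ∫⁻ u in Set.Ioi a, ENNReal.ofReal ((A / u) ^ p) := by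
        refine setLIntegral_mono hmeas fun u hu => ENNReal.ofReal_le_ofReal (key u hu)
    _ = ENNReal.ofReal (∫ u in Set.Ioi a, (A / u) ^ p) := by
        rw [← ofReal_integral_eq_lintegral_ofReal hint]
        filter_upwards [ae_restrict_mem measurableSet_Ioi] with u hu
        exact Real.rpow_nonneg (div_nonneg hA0.le (ha0.trans hu).le) _
    _ ≤ ENNReal.ofReal (3 ^ d * ((d - ε) / ε) * r ^ d * f (2 * r)) := by
        rw [hval]
        exact ENNReal.ofReal_le_ofReal hfin
end

section
/- Let A ⊂ ℝ^p be a compact d-regular set and f a d-Riesz-like function. Then there exist constants C₀ > 0 and r₀ > 0 such that for every x ∈ A, y ∈ A and 0 < r < r₀, (1/H_d(A ∩ B(y,r))) · (1/f(|x−y|)) · ∫_{A ∩ B(y,r)} f(|x−z|) dH_d(z) ≤ C₀. -/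
open MeasureTheory Metric Set Filter Topology ENNReal
open scoped Classical

noncomputable section

/-- `A` is a `d`-regular set: the `d`-dimensional Hausdorff measure of small balls
intersected with `A` is comparable to `r^d`. -/
def DRegular {p : ℕ} (d : ℝ) (A : Set (EuclideanSpace ℝ (Fin p))) : Prop :=
  ∃ c > (0:ℝ), ∃ C > (0:ℝ), ∀ y ∈ A, ∀ r : ℝ, 0 < r → r < Metric.diam A →
    ENNReal.ofReal (c * r ^ d) ≤ μH[d] (A ∩ Metric.ball y r) ∧
      μH[d] (A ∩ Metric.ball y r) ≤ ENNReal.ofReal (C * r ^ d)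

/-- `f` is a `d`-Riesz-like function: positive, continuous and strictly decreasing on
`(0, ∞)`, and `t ↦ t ^ (d - ε) * f t` is increasing on `(0, tε]` for some `0 < ε < d`. -/
def RieszLike (d : ℝ) (f : ℝ → ℝ) : Prop :=
  ContinuousOn f (Set.Ioi 0) ∧ StrictAntiOn f (Set.Ioi 0) ∧
    (∀ t ∈ Set.Ioi (0:ℝ), 0 < f t) ∧
    ∃ ε ∈ Set.Ioo (0:ℝ) d, ∃ tε > (0:ℝ),
      MonotoneOn (fun t => t ^ (d - ε) * f t) (Set.Ioc 0 tε)

/-- The kernel `K(x,y) = f (|x - y|)`, with the value on the diagonal defined as the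
(lower semicontinuous) limit `f(0⁺) = sup_{t > 0} f t`. -/
def rkernel {p : ℕ} (f : ℝ → ℝ) (x y : EuclideanSpace ℝ (Fin p)) : ℝ≥0∞ :=
  if x = y then ⨆ t : {t : ℝ // 0 < t}, ENNReal.ofReal (f t.1)
  else ENNReal.ofReal (f (dist x y))

/-- The potential `U_f^μ(y) = ∫ f(|x - y|) dμ(x)`. -/
def potential {p : ℕ} (f : ℝ → ℝ) (μ : Measure (EuclideanSpace ℝ (Fin p)))
    (y : EuclideanSpace ℝ (Fin p)) : ℝ≥0∞ :=
  ∫⁻ x, rkernel f x y ∂μ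

/-- The `f`-polarization of `μ` on `A`: `P_f(μ) = inf_{y ∈ A} U_f^μ(y)`. -/
def polar {p : ℕ} (f : ℝ → ℝ) (A : Set (EuclideanSpace ℝ (Fin p)))
    (μ : Measure (EuclideanSpace ℝ (Fin p))) : ℝ≥0∞ :=
  ⨅ y ∈ A, potential f μ y

lemma riesz_key {d ε tε : ℝ} {f : ℝ → ℝ}
    (hmono : MonotoneOn (fun t => t ^ (d - ε) * f t) (Set.Ioc 0 tε))
    {s t : ℝ} (hs : 0 < s) (hst : s ≤ t) (ht : t ≤ tε) :
    f s ≤ (t / s) ^ (d - ε) * f t := by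
  have hs' : (0:ℝ) < s ^ (d - ε) := Real.rpow_pos_of_pos hs _
  have h := hmono (Set.mem_Ioc.2 ⟨hs, hst.trans ht⟩)
    (Set.mem_Ioc.2 ⟨hs.trans_le hst, ht⟩) hst
  simp only at h
  rw [Real.div_rpow (le_of_lt (hs.trans_le hst)) hs.le, div_mul_eq_mul_div,
    le_div_iff₀ hs', mul_comm (f s)]
  exact h


/-- Technical lemma: for a compact `d`-regular set `A` and a `d`-Riesz-like `f`, there are
`C₀, r₀ > 0` such that for all `x, y ∈ A` and `0 < r < r₀`,
`(1 / H_d(A ∩ B(y,r))) * (1 / f(|x-y|)) * ∫_{A ∩ B(y,r)} f(|x-z|) dH_d(z) ≤ C₀`. -/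
theorem averaged_kernel_bound (p : ℕ) (d : ℝ) (hd : 0 < d) (hdp : d ≤ p)
    (A : Set (EuclideanSpace ℝ (Fin p))) (hA : IsCompact A) (hreg : DRegular d A)
    (f : ℝ → ℝ) (hf : RieszLike d f) :
    ∃ C₀ > (0:ℝ), ∃ r₀ > (0:ℝ), ∀ x ∈ A, ∀ y ∈ A, ∀ r : ℝ, 0 < r → r < r₀ →
      (μH[d] (A ∩ Metric.ball y r))⁻¹ * (rkernel f x y)⁻¹ *
          ∫⁻ z in A ∩ Metric.ball y r, rkernel f x z ∂μH[d] ≤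
        ENNReal.ofReal C₀ := by
  obtain ⟨hfc, hfa, hfp, ε, hε, tε, htε, hmono⟩ := hf
  obtain ⟨c, hc, C, hC, hreg'⟩ := hreg
  haveI : NullSingletonClass (μH[d] : Measure (EuclideanSpace ℝ (Fin p))) :=
    MeasureTheory.Measure.noAtoms_hausdorff _ hd
  set D := Metric.diam A with hDdef
  rcases le_or_gt D 0 with hD0 | hD0
  · -- degenerate case: diam A ≤ 0
    refine ⟨1, one_pos, 1, one_pos, fun x hx y hy r hr hrr => ?_⟩
    have hsub : A ∩ Metric.ball y r ⊆ {y} := by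
      rintro a ⟨ha, _⟩
      have h1 := Metric.dist_le_diam_of_mem hA.isBounded ha hy
      have h2 : dist a y = 0 := le_antisymm (h1.trans hD0) dist_nonneg
      simpa [Set.mem_singleton_iff] using dist_eq_zero.1 h2
    have hμ0 : μH[d] (A ∩ Metric.ball y r) = 0 :=
      le_antisymm ((measure_mono hsub).trans_eq (measure_singleton y)) (zero_le)
    rw [Measure.restrict_eq_zero.2 hμ0, lintegral_zero_measure, mul_zero]
    exact zero_le
  · -- main case
    have hε0 : (0:ℝ) < ε := hε.1
    have hεd : ε < d := hε.2
    set q : ℝ := (2:ℝ) ^ (-ε) with hqdef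
    have hq0 : 0 < q := Real.rpow_pos_of_pos two_pos _
    have hq1 : q < 1 := Real.rpow_lt_one_of_one_lt_of_neg one_lt_two (by linarith)
    set C₁ : ℝ := (2:ℝ) ^ (d - ε) ⊔ (f (tε/2) / f D) with hC₁def
    set M : ℝ := C * 3 ^ d * 2 ^ (d - ε) / c with hMdef
    set C₂ : ℝ := M * (1 - q)⁻¹ with hC₂def
    set C₀ : ℝ := 1 ⊔ (C₁ ⊔ C₂) with hC₀def
    have hC₀pos : (0:ℝ) < C₀ := lt_of_lt_of_le one_pos le_sup_left
    have hC₁C₀ : C₁ ≤ C₀ := le_sup_of_le_right le_sup_left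
    have hC₂C₀ : C₂ ≤ C₀ := le_sup_of_le_right le_sup_right
    refine ⟨C₀, hC₀pos, min (tε/3) (D/3), by positivity, fun x hx y hy r hr hrr => ?_⟩
    have hrtε : r < tε/3 := hrr.trans_le (min_le_left _ _)
    have hrD3 : r < D/3 := hrr.trans_le (min_le_right _ _)
    have hrD : r < D := by linarith
    set B := A ∩ Metric.ball y r with hBdef
    have hBmeas : MeasurableSet B := hA.isClosed.measurableSet.inter measurableSet_ball
    obtain ⟨hlow, hupp⟩ := hreg' y hy r hr hrD
    have hμBtop : μH[d] B ≠ ∞ := (hupp.trans_lt ofReal_lt_top).ne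
    by_cases hμB : μH[d] B = 0
    · rw [Measure.restrict_eq_zero.2 hμB, lintegral_zero_measure, mul_zero]
      exact zero_le
    rcases le_or_gt (2*r) (dist x y) with hfar | hnear
    · -- FAR case : 2r ≤ |x - y|
      set t := dist x y with htdef
      have ht0 : (0:ℝ) < t := lt_of_lt_of_le (by linarith) hfar
      have hxy : x ≠ y := dist_pos.1 ht0
      have hk : rkernel f x y = ENNReal.ofReal (f t) := by rw [rkernel, if_neg hxy]
      have hft : 0 < f t := hfp t ht0
      have hub : ∀ z ∈ B, rkernel f x z ≤ ENNReal.ofReal (f (t/2)) := by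
        intro z hz
        have hzr : dist z y < r := by simpa [Metric.mem_ball] using hz.2
        have htri := dist_triangle x z y
        have hdz : t/2 ≤ dist x z := by linarith
        have hdz0 : (0:ℝ) < dist x z := lt_of_lt_of_le (by linarith) hdz
        have hxz : x ≠ z := dist_pos.1 hdz0
        rw [rkernel, if_neg hxz]
        exact ofReal_le_ofReal
          (hfa.antitoneOn (Set.mem_Ioi.2 (by linarith)) (Set.mem_Ioi.2 hdz0) hdz)
      have hint : ∫⁻ z in B, rkernel f x z ∂μH[d] ≤ ENNReal.ofReal (f (t/2)) * μH[d] B :=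
        le_trans (setLIntegral_mono' hBmeas hub) (le_of_eq (setLIntegral_const _ _))
      have hratio : f (t/2) ≤ C₁ * f t := by
        rcases le_or_gt t tε with h1 | h1
        · have h2 := riesz_key hmono (half_pos ht0) (half_le_self ht0.le) h1
          have h3 : t / (t/2) = 2 := by field_simp
          rw [h3] at h2
          exact h2.trans (mul_le_mul_of_nonneg_right le_sup_left (hfp t ht0).le)
        · have htD : t ≤ D := Metric.dist_le_diam_of_mem hA.isBounded hx hy
          have hfD : 0 < f D := hfp D hD0
          have h2 : f (t/2) ≤ f (tε/2) :=
            hfa.antitoneOn (Set.mem_Ioi.2 (half_pos htε)) (Set.mem_Ioi.2 (half_pos ht0))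
              (by linarith)
          have h3 : f D ≤ f t := hfa.antitoneOn (Set.mem_Ioi.2 ht0)
            (Set.mem_Ioi.2 (ht0.trans_le htD)) htD
          have h4 : (0:ℝ) ≤ f (tε/2) / f D := div_nonneg (hfp _ (half_pos htε)).le hfD.le
          calc f (t/2) ≤ f (tε/2) := h2
            _ = (f (tε/2) / f D) * f D := by field_simp
            _ ≤ C₁ * f t := mul_le_mul le_sup_right h3 hfD.le
                (le_trans (by positivity) (le_sup_left : (2:ℝ)^(d-ε) ≤ C₁))
      have hk0 : rkernel f x y ≠ 0 := by
        rw [hk]; simpa [ENNReal.ofReal_eq_zero, not_le] using hft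
      have hktop : rkernel f x y ≠ ∞ := by rw [hk]; exact ofReal_ne_top
      calc (μH[d] B)⁻¹ * (rkernel f x y)⁻¹ * ∫⁻ z in B, rkernel f x z ∂μH[d]
          ≤ (μH[d] B)⁻¹ * (rkernel f x y)⁻¹ *
            (ENNReal.ofReal C₁ * (rkernel f x y * μH[d] B)) := by
            refine mul_le_mul' le_rfl (hint.trans ?_)
            have : ENNReal.ofReal (f (t/2)) ≤ ENNReal.ofReal C₁ * rkernel f x y := by
              rw [hk, ← ENNReal.ofReal_mul (le_trans (by positivity)
                (le_sup_left : (2:ℝ)^(d-ε) ≤ C₁))]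
              exact ofReal_le_ofReal hratio
            exact mul_le_mul' this le_rfl |>.trans_eq (mul_assoc _ _ _)
        _ = ENNReal.ofReal C₁ * (((rkernel f x y)⁻¹ * rkernel f x y) *
            ((μH[d] B)⁻¹ * μH[d] B)) := by ring
        _ = ENNReal.ofReal C₁ := by
            rw [ENNReal.inv_mul_cancel hk0 hktop, ENNReal.inv_mul_cancel hμB hμBtop]
            simp
        _ ≤ ENNReal.ofReal C₀ := ofReal_le_ofReal hC₁C₀
    · -- NEAR case : |x - y| < 2r
      set R := 3 * r with hRdef
      have hR0 : (0:ℝ) < R := by positivity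
      have hRtε : R ≤ tε := by simp only [hRdef]; linarith
      have hRD : R < D := by simp only [hRdef]; linarith
      have hfR : 0 < f R := hfp R hR0
      have hk : ENNReal.ofReal (f R) ≤ rkernel f x y := by
        rw [rkernel]
        split_ifs with h
        · exact le_iSup (fun t : {t : ℝ // 0 < t} => ENNReal.ofReal (f t.1)) ⟨R, hR0⟩
        · have hd0 : (0:ℝ) < dist x y := dist_pos.2 h
          exact ofReal_le_ofReal
            (hfa.antitoneOn (Set.mem_Ioi.2 hd0) (Set.mem_Ioi.2 hR0) (by linarith))
      set ρ : ℕ → ℝ := fun j => R / 2 ^ j with hρdef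
      have hρ0 : ∀ j, 0 < ρ j := fun j => by positivity
      have h2pow : ∀ j : ℕ, (1:ℝ) ≤ 2 ^ j := fun j => by exact_mod_cast Nat.one_le_two_pow
      have hρle : ∀ j, ρ j ≤ R := fun j => div_le_self hR0.le (h2pow j)
      have hρsucc : ∀ j : ℕ, ρ (j+1) = ρ j / 2 := fun j => by
        simp only [hρdef, pow_succ]; ring
      -- the annuli
      set S : ℕ → Set (EuclideanSpace ℝ (Fin p)) :=
        fun j => B ∩ (Metric.ball x (ρ j) \ Metric.ball x (ρ (j+1))) with hSdef
      have hcover : B \ {x} ⊆ ⋃ j : ℕ, S j := by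
        rintro z ⟨hzB, hzx⟩
        have hzx' : z ≠ x := hzx
        have hdz0 : (0:ℝ) < dist z x := dist_pos.2 hzx'
        have hzy : dist z y < r := by simpa [Metric.mem_ball] using hzB.2
        have hdzR : dist z x < R := by
          have h1 := dist_triangle z y x
          have h2 : dist y x = dist x y := dist_comm y x
          simp only [hRdef]; linarith
        have hex : ∃ j : ℕ, ρ (j+1) ≤ dist z x := by
          obtain ⟨n, hn⟩ := exists_nat_gt (R / dist z x)
          have h2n : (n:ℝ) < 2 ^ n := by exact_mod_cast Nat.lt_two_pow_self
          refine ⟨n, ?_⟩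
          have h3 : R / dist z x < 2 ^ (n+1) := by
            have hps : (2:ℝ) ^ (n+1) = 2 ^ n * 2 := pow_succ 2 n
            nlinarith [pow_pos (two_pos (α := ℝ)) n]
          rw [div_lt_iff₀ hdz0] at h3
          simp only [hρdef]
          rw [div_le_iff₀ (by positivity)]
          linarith
        refine Set.mem_iUnion.2 ⟨Nat.find hex, hzB, ?_, ?_⟩
        · -- z ∈ ball x (ρ (Nat.find hex))
          rw [Metric.mem_ball]
          rcases Nat.eq_zero_or_pos (Nat.find hex) with h0 | hpos
          · rw [h0]
            have : ρ 0 = R := by simp [hρdef]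
            rw [this]; exact hdzR
          · have hmin := Nat.find_min hex (Nat.sub_lt hpos one_pos)
            rw [show Nat.find hex - 1 + 1 = Nat.find hex by omega] at hmin
            exact lt_of_not_ge hmin
        · -- z ∉ ball x (ρ (Nat.find hex + 1))
          simp only [Metric.mem_ball]
          exact not_lt.2 (Nat.find_spec hex)
      -- splitting the integral
      have hsplit : ∫⁻ z in B, rkernel f x z ∂μH[d] ≤
          ∑' j : ℕ, ∫⁻ z in S j, rkernel f x z ∂μH[d] := by
        have h0 : μH[d] (B ∩ {x}) = 0 :=
          le_antisymm ((measure_mono Set.inter_subset_right).trans_eq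
            (measure_singleton x)) (zero_le)
        have h1 : (μH[d]).restrict B = (μH[d]).restrict (B \ {x}) :=
          (Measure.restrict_congr_set (diff_ae_eq_self.2 h0)).symm
        rw [h1]
        exact le_trans (lintegral_mono_set hcover) (lintegral_iUnion_le _ _)
      -- bound on each annulus
      have hterm : ∀ j : ℕ, ∫⁻ z in S j, rkernel f x z ∂μH[d] ≤
          ENNReal.ofReal (f (ρ (j+1)) * (C * (ρ j) ^ d)) := by
        intro j
        have hSmeas : MeasurableSet (S j) :=
          hBmeas.inter (measurableSet_ball.diff measurableSet_ball)
        have hub : ∀ z ∈ S j, rkernel f x z ≤ ENNReal.ofReal (f (ρ (j+1))) := by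
          rintro z ⟨hzB, hzball, hznot⟩
          have h1 : ρ (j+1) ≤ dist z x := by
            rw [Metric.mem_ball] at hznot; exact not_lt.1 hznot
          have hdz0 : (0:ℝ) < dist z x := lt_of_lt_of_le (hρ0 _) h1
          have hxz : x ≠ z := (dist_pos.1 hdz0).symm
          rw [rkernel, if_neg hxz, dist_comm]
          exact ofReal_le_ofReal
            (hfa.antitoneOn (Set.mem_Ioi.2 (hρ0 _)) (Set.mem_Ioi.2 hdz0) h1)
        have hsub : S j ⊆ A ∩ Metric.ball x (ρ j) := by
          rintro z ⟨hzB, hzball, -⟩; exact ⟨hzB.1, hzball⟩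
        have hμS : μH[d] (S j) ≤ ENNReal.ofReal (C * (ρ j) ^ d) :=
          (measure_mono hsub).trans
            (hreg' x hx (ρ j) (hρ0 j) ((hρle j).trans_lt hRD)).2
        calc ∫⁻ z in S j, rkernel f x z ∂μH[d]
            ≤ ∫⁻ _ in S j, ENNReal.ofReal (f (ρ (j+1))) ∂μH[d] :=
              setLIntegral_mono' hSmeas hub
          _ = ENNReal.ofReal (f (ρ (j+1))) * μH[d] (S j) := setLIntegral_const _ _
          _ ≤ ENNReal.ofReal (f (ρ (j+1))) * ENNReal.ofReal (C * (ρ j) ^ d) :=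
              mul_le_mul' le_rfl hμS
          _ = ENNReal.ofReal (f (ρ (j+1)) * (C * (ρ j) ^ d)) :=
              (ENNReal.ofReal_mul (hfp _ (hρ0 _)).le).symm
      -- the real estimate on each term
      set K : ℝ := C * R ^ d * f R * 2 ^ (d - ε) with hKdef
      have hK0 : (0:ℝ) ≤ K := by positivity
      have hreal : ∀ j : ℕ, f (ρ (j+1)) * (C * (ρ j) ^ d) ≤ K * q ^ j := by
        intro j
        have b0 : (0:ℝ) < 2 ^ j := by positivity
        have key : f (ρ (j+1)) ≤ ((2:ℝ) ^ (j+1)) ^ (d - ε) * f R := by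
          have h := riesz_key hmono (hρ0 (j+1)) (hρle (j+1)) hRtε
          rwa [show R / ρ (j+1) = (2:ℝ) ^ (j+1) by
            simp only [hρdef]; field_simp] at h
        have e3 : (ρ j) ^ d = R ^ d / ((2:ℝ) ^ j) ^ d := by
          simp only [hρdef]; rw [Real.div_rpow hR0.le (by positivity)]
        have e4 : ((2:ℝ) ^ (j+1)) ^ (d - ε) =
            (2:ℝ) ^ (d - ε) * (((2:ℝ) ^ j) ^ d * ((2:ℝ) ^ j) ^ (-ε)) := by
          rw [pow_succ, Real.mul_rpow (by positivity) (by norm_num),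
            show d - ε = d + (-ε) by ring, Real.rpow_add b0]
          ring
        have e5 : ((2:ℝ) ^ j) ^ (-ε) = q ^ j := by
          rw [hqdef, ← Real.rpow_natCast (2:ℝ) j, ← Real.rpow_natCast ((2:ℝ) ^ (-ε)) j,
            ← Real.rpow_mul (by norm_num : (0:ℝ) ≤ 2),
            ← Real.rpow_mul (by norm_num : (0:ℝ) ≤ 2)]
          ring_nf
        have hbd : (0:ℝ) < ((2:ℝ) ^ j) ^ d := Real.rpow_pos_of_pos b0 _
        calc f (ρ (j+1)) * (C * (ρ j) ^ d)
            ≤ ((2:ℝ) ^ (j+1)) ^ (d - ε) * f R * (C * (ρ j) ^ d) := by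
              have : (0:ℝ) ≤ C * (ρ j) ^ d := by positivity
              exact mul_le_mul_of_nonneg_right key this
          _ = K * q ^ j := by
              rw [e3, e4, ← e5, hKdef]
              field_simp
      -- summing up
      have hsum : (∑' j : ℕ, ∫⁻ z in S j, rkernel f x z ∂μH[d]) ≤
          ENNReal.ofReal K * (1 - ENNReal.ofReal q)⁻¹ := by
        calc (∑' j : ℕ, ∫⁻ z in S j, rkernel f x z ∂μH[d])
            ≤ ∑' j : ℕ, ENNReal.ofReal (K * q ^ j) :=
              ENNReal.tsum_le_tsum (fun j => (hterm j).trans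
                (ofReal_le_ofReal (hreal j)))
          _ = ∑' j : ℕ, ENNReal.ofReal K * (ENNReal.ofReal q) ^ j := by
              congr 1; funext j
              rw [ENNReal.ofReal_mul hK0, ← ENNReal.ofReal_pow hq0.le]
          _ = ENNReal.ofReal K * ∑' j : ℕ, (ENNReal.ofReal q) ^ j :=
              ENNReal.tsum_mul_left
          _ = ENNReal.ofReal K * (1 - ENNReal.ofReal q)⁻¹ := by
              rw [ENNReal.tsum_geometric]
      have hG : (1 - ENNReal.ofReal q)⁻¹ = ENNReal.ofReal ((1 - q)⁻¹) := by
        rw [← ENNReal.ofReal_one, ← ENNReal.ofReal_sub 1 hq0.le,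
          ← ENNReal.ofReal_inv_of_pos (by linarith)]
      have hKfact : ENNReal.ofReal K =
          ENNReal.ofReal (c * r ^ d) * ENNReal.ofReal (f R) * ENNReal.ofReal M := by
        rw [← ENNReal.ofReal_mul (by positivity), ← ENNReal.ofReal_mul (by positivity)]
        congr 1
        have hR3 : R ^ d = 3 ^ d * r ^ d := by
          rw [hRdef, Real.mul_rpow (by norm_num) hr.le]
        rw [hKdef, hMdef, hR3]
        field_simp
      have ha0 : ENNReal.ofReal (c * r ^ d) ≠ 0 := by
        simp only [ne_eq, ENNReal.ofReal_eq_zero, not_le]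
        positivity
      have hb0 : ENNReal.ofReal (f R) ≠ 0 := by
        simp only [ne_eq, ENNReal.ofReal_eq_zero, not_le]
        exact hfR
      have hμinv : (μH[d] B)⁻¹ ≤ (ENNReal.ofReal (c * r ^ d))⁻¹ :=
        ENNReal.inv_le_inv.2 hlow
      have hkinv : (rkernel f x y)⁻¹ ≤ (ENNReal.ofReal (f R))⁻¹ :=
        ENNReal.inv_le_inv.2 hk
      have hM0 : (0:ℝ) ≤ M := by positivity
      calc (μH[d] B)⁻¹ * (rkernel f x y)⁻¹ * ∫⁻ z in B, rkernel f x z ∂μH[d]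
          ≤ (ENNReal.ofReal (c * r ^ d))⁻¹ * (ENNReal.ofReal (f R))⁻¹ *
            (ENNReal.ofReal (c * r ^ d) * ENNReal.ofReal (f R) *
              (ENNReal.ofReal M * ENNReal.ofReal ((1 - q)⁻¹))) := by
            refine mul_le_mul' (mul_le_mul' hμinv hkinv) ?_
            refine (hsplit.trans hsum).trans (le_of_eq ?_)
            rw [hKfact, hG]
            ring
        _ = ((ENNReal.ofReal (c * r ^ d))⁻¹ * ENNReal.ofReal (c * r ^ d)) *
            (((ENNReal.ofReal (f R))⁻¹ * ENNReal.ofReal (f R)) *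
              (ENNReal.ofReal M * ENNReal.ofReal ((1 - q)⁻¹))) := by ring
        _ = ENNReal.ofReal M * ENNReal.ofReal ((1 - q)⁻¹) := by
            rw [ENNReal.inv_mul_cancel ha0 ofReal_ne_top,
              ENNReal.inv_mul_cancel hb0 ofReal_ne_top]
            simp
        _ = ENNReal.ofReal C₂ := by
            rw [← ENNReal.ofReal_mul hM0, hC₂def]
        _ ≤ ENNReal.ofReal C₀ := ofReal_le_ofReal hC₂C₀
end
end

section
/- Let A ⊂ ℝ^p be a compact d-regular set and f a d-Riesz-like function. Then the potential of the Hausdorff measure restricted to A, y ↦ ∫_A f(|x−y|) dH_d(x), is bounded above on A by a constant independent of y. -/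
open MeasureTheory Metric Set Filter Topology ENNReal
open scoped Classical

noncomputable section

/-- Auxiliary real power identity used in the annulus estimate. -/
lemma riesz_key_eq {d ε δ : ℝ} (hδ0 : 0 < δ) (j : ℕ) :
    (δ / 2) ^ (d - ε) * ((δ / 2 ^ (j + 1)) ^ (ε - d) * (δ / 2 ^ j) ^ d)
      = δ ^ d * ((2:ℝ) ^ (-ε)) ^ j := by
  have h2j : (0:ℝ) < 2 ^ j := by positivity
  have h2j1 : (0:ℝ) < 2 ^ (j+1) := by positivity
  have hs : (0:ℝ) < δ / 2 := by positivity
  have ht : (0:ℝ) < δ / 2 ^ (j+1) := by positivity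
  have hu : (0:ℝ) < δ / 2 ^ j := by positivity
  have hr : (0:ℝ) < (2:ℝ) ^ (-ε) := Real.rpow_pos_of_pos two_pos _
  have hL : (0:ℝ) < (δ / 2) ^ (d - ε) * ((δ / 2 ^ (j + 1)) ^ (ε - d) * (δ / 2 ^ j) ^ d) := by
    positivity
  have hR : (0:ℝ) < δ ^ d * ((2:ℝ) ^ (-ε)) ^ j := by positivity
  apply Real.log_injOn_pos (Set.mem_Ioi.2 hL) (Set.mem_Ioi.2 hR)
  rw [Real.log_mul (by positivity) (by positivity),
    Real.log_mul (by positivity) (by positivity),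
    Real.log_mul (by positivity) (by positivity),
    Real.log_rpow hs, Real.log_rpow ht, Real.log_rpow hu, Real.log_rpow hδ0,
    Real.log_pow, Real.log_rpow two_pos,
    Real.log_div hδ0.ne' (by norm_num : (2:ℝ) ≠ 0),
    Real.log_div hδ0.ne' h2j1.ne', Real.log_div hδ0.ne' h2j.ne',
    Real.log_pow, Real.log_pow]
  push_cast
  ring

/-- The potential of the Hausdorff measure restricted to a compact `d`-regular set `A`,
`y ↦ ∫_A f(|x-y|) dH_d(x)`, is bounded above on `A` by a constant independent of `y`. -/
theorem hausdorff_potential_bounded (p : ℕ) (d : ℝ) (hd : 0 < d) (hdp : d ≤ p)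
    (A : Set (EuclideanSpace ℝ (Fin p))) (hA : IsCompact A) (hreg : DRegular d A)
    (f : ℝ → ℝ) (hf : RieszLike d f) :
    ∃ C : ℝ, ∀ y ∈ A, (∫⁻ x in A, rkernel f x y ∂μH[d]) ≤ ENNReal.ofReal C := by
  classical
  obtain ⟨c, hc, C0, hC0, hAreg⟩ := hreg
  obtain ⟨hfc, hfanti, hfpos, ε, ⟨hε0, hεd⟩, tε, htε, hmono⟩ := hf
  haveI : MeasureTheory.NoAtoms (μH[d] : Measure (EuclideanSpace ℝ (Fin p))) :=
    MeasureTheory.Measure.noAtoms_hausdorff _ hd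
  by_cases hdiam : Metric.diam A ≤ 0
  · refine ⟨0, fun y hy => ?_⟩
    have hsub : A.Subsingleton := fun x hx z hz =>
      eq_of_dist_eq_zero (le_antisymm
        ((Metric.dist_le_diam_of_mem hA.isBounded hx hz).trans hdiam) dist_nonneg)
    have hz : μH[d] A = 0 := by
      rcases hsub.eq_empty_or_singleton with rfl | ⟨x, rfl⟩
      · simp
      · exact (MeasureTheory.Measure.noAtoms_hausdorff _ hd : NullSingletonClass (μH[d] : Measure (EuclideanSpace ℝ (Fin p)))).measure_singleton x
    rw [setLIntegral_measure_zero _ _ hz]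
    simp
  push_neg at hdiam
  set δ := min tε (Metric.diam A / 2) with hδdef
  have hδ0 : 0 < δ := lt_min htε (by linarith)
  have hδtε : δ ≤ tε := min_le_left _ _
  have hδdiam : δ < Metric.diam A := lt_of_le_of_lt (min_le_right _ _) (by linarith)
  have hAmeas : MeasurableSet A := hA.isClosed.measurableSet
  -- finiteness of the measure of A
  have hAfin : μH[d] A ≠ ∞ := by
    obtain ⟨t, hts, hcover⟩ := hA.elim_nhds_subcover (fun x => Metric.ball x (δ/2))
      (fun x _ => Metric.ball_mem_nhds x (by positivity))
    have hle : μH[d] A ≤ ∑ x ∈ t, ENNReal.ofReal (C0 * (δ/2) ^ d) := by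
      calc μH[d] A ≤ μH[d] (⋃ x ∈ t, A ∩ Metric.ball x (δ/2)) := by
            refine measure_mono fun z hz => ?_
            obtain ⟨x, hxt, hx⟩ := Set.mem_iUnion₂.1 (hcover hz)
            exact Set.mem_iUnion₂.2 ⟨x, hxt, hz, hx⟩
        _ ≤ ∑ x ∈ t, μH[d] (A ∩ Metric.ball x (δ/2)) := measure_biUnion_finset_le t _
        _ ≤ ∑ x ∈ t, ENNReal.ofReal (C0 * (δ/2) ^ d) := by
            refine Finset.sum_le_sum fun x hxt => ?_
            exact (hAreg x (hts x hxt) (δ/2) (by positivity) (by linarith)).2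
    exact ne_top_of_le_ne_top
      (ENNReal.sum_lt_top.2 fun _ _ => ENNReal.ofReal_lt_top).ne hle
  have hδ2Ioc : δ/2 ∈ Set.Ioc (0:ℝ) tε := ⟨by positivity, by linarith⟩
  have hfδ2 : 0 < f (δ/2) := hfpos _ (Set.mem_Ioi.2 (by positivity))
  have hfδ : 0 < f δ := hfpos _ (Set.mem_Ioi.2 hδ0)
  set r : ℝ := (2:ℝ) ^ (-ε) with hrdef
  have hr0 : 0 < r := Real.rpow_pos_of_pos two_pos _
  have hr1 : r < 1 := by
    rw [hrdef]
    exact Real.rpow_lt_one_of_one_lt_of_neg one_lt_two (neg_neg_iff_pos.2 hε0)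
  set K : ℝ := C0 * (f (δ/2) * δ ^ d) with hKdef
  have hK0 : 0 < K := mul_pos hC0 (mul_pos hfδ2 (Real.rpow_pos_of_pos hδ0 _))
  -- the key annulus inequality
  have key : ∀ j : ℕ, f (δ / 2 ^ (j+1)) * (C0 * (δ / 2 ^ j) ^ d) ≤ K * r ^ j := by
    intro j
    have h2j1 : (0:ℝ) < 2 ^ (j+1) := by positivity
    have ht0 : (0:ℝ) < δ / 2 ^ (j+1) := by positivity
    have h2le : (2:ℝ) ≤ 2 ^ (j+1) := by
      calc (2:ℝ) = 2 ^ 1 := (pow_one 2).symm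
        _ ≤ 2 ^ (j+1) := pow_le_pow_right₀ one_le_two (Nat.le_add_left 1 j)
    have hts : δ / 2 ^ (j+1) ≤ δ / 2 := by gcongr
    have hmem_t : δ / 2 ^ (j+1) ∈ Set.Ioc (0:ℝ) tε := ⟨ht0, hts.trans hδ2Ioc.2⟩
    have H := hmono hmem_t hδ2Ioc hts
    simp only at H
    have htpow : (δ / 2 ^ (j+1)) ^ (d-ε) * (δ / 2 ^ (j+1)) ^ (ε-d) = 1 := by
      rw [← Real.rpow_add ht0]
      norm_num
    have hstep : f (δ / 2 ^ (j+1)) * (C0 * (δ / 2 ^ j) ^ d)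
        = C0 * (((δ / 2 ^ (j+1)) ^ (d-ε) * f (δ / 2 ^ (j+1)))
            * ((δ / 2 ^ (j+1)) ^ (ε-d) * (δ / 2 ^ j) ^ d)) := by
      rw [show C0 * (((δ / 2 ^ (j+1)) ^ (d-ε) * f (δ / 2 ^ (j+1)))
            * ((δ / 2 ^ (j+1)) ^ (ε-d) * (δ / 2 ^ j) ^ d))
          = C0 * (f (δ / 2 ^ (j+1))
            * (((δ / 2 ^ (j+1)) ^ (d-ε) * (δ / 2 ^ (j+1)) ^ (ε-d)) * (δ / 2 ^ j) ^ d)) by ring,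
        htpow]
      ring
    rw [hstep]
    calc C0 * (((δ / 2 ^ (j+1)) ^ (d-ε) * f (δ / 2 ^ (j+1)))
            * ((δ / 2 ^ (j+1)) ^ (ε-d) * (δ / 2 ^ j) ^ d))
        ≤ C0 * (((δ / 2) ^ (d-ε) * f (δ / 2))
            * ((δ / 2 ^ (j+1)) ^ (ε-d) * (δ / 2 ^ j) ^ d)) := by gcongr
      _ = K * r ^ j := by
          rw [hKdef, hrdef,
            show (δ / 2) ^ (d-ε) * f (δ / 2) * ((δ / 2 ^ (j+1)) ^ (ε-d) * (δ / 2 ^ j) ^ d)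
              = f (δ / 2) * ((δ / 2) ^ (d-ε)
                  * ((δ / 2 ^ (j+1)) ^ (ε-d) * (δ / 2 ^ j) ^ d)) by ring,
            riesz_key_eq hδ0 j]
          ring
  -- the constant
  have hofr : ENNReal.ofReal r < 1 := ENNReal.ofReal_lt_one.2 hr1
  have hgeo : (1 - ENNReal.ofReal r)⁻¹ ≠ ⊤ := ENNReal.inv_ne_top.2 (tsub_pos_of_lt hofr).ne'
  set T : ℝ≥0∞ := ENNReal.ofReal (f δ) * μH[d] A
      + ENNReal.ofReal K * (1 - ENNReal.ofReal r)⁻¹ with hT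
  have hTne : T ≠ ⊤ :=
    ENNReal.add_ne_top.2 ⟨ENNReal.mul_ne_top ENNReal.ofReal_ne_top hAfin,
      ENNReal.mul_ne_top ENNReal.ofReal_ne_top hgeo⟩
  refine ⟨T.toReal, fun y hy => ?_⟩
  rw [ENNReal.ofReal_toReal hTne]
  -- covering A by the far region, the center, and dyadic annuli
  have hcov : A ⊆ ((A \ Metric.ball y δ) ∪ {y})
      ∪ ⋃ j : ℕ, A ∩ (Metric.ball y (δ / 2 ^ j) \ Metric.ball y (δ / 2 ^ (j+1))) := by
    intro x hx
    rcases eq_or_ne x y with rfl | hxy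
    · exact Or.inl (Or.inr rfl)
    by_cases hfar : δ ≤ dist x y
    · exact Or.inl (Or.inl ⟨hx, fun hb => absurd (Metric.mem_ball.1 hb) (not_lt.2 hfar)⟩)
    push_neg at hfar
    have hdx : 0 < dist x y := dist_pos.2 hxy
    have hex : ∃ j : ℕ, δ / 2 ^ (j+1) ≤ dist x y := by
      obtain ⟨j, hj⟩ := pow_unbounded_of_one_lt (δ / dist x y) (one_lt_two (α := ℝ))
      refine ⟨j, ?_⟩
      rw [div_le_iff₀ (by positivity)]
      have h2 : δ < 2 ^ j * dist x y := by
        have := (div_lt_iff₀ hdx).1 hj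
        linarith
      have h3 : (2:ℝ) ^ j ≤ 2 ^ (j+1) := by
        calc (2:ℝ) ^ j = 2 ^ j * 1 := (mul_one _).symm
          _ ≤ 2 ^ j * 2 := by nlinarith [pow_pos (zero_lt_two (α := ℝ)) j]
          _ = 2 ^ (j+1) := (pow_succ 2 j).symm
      have h4 : (2:ℝ) ^ j * dist x y ≤ 2 ^ (j+1) * dist x y :=
        mul_le_mul_of_nonneg_right h3 dist_nonneg
      rw [mul_comm]
      linarith
    set n := Nat.find hex with hn
    have hn1 : δ / 2 ^ (n+1) ≤ dist x y := Nat.find_spec hex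
    have hn2 : dist x y < δ / 2 ^ n := by
      rcases Nat.eq_zero_or_pos n with h0 | hpos
      · rw [h0, pow_zero, div_one]; exact hfar
      · obtain ⟨m, hm⟩ := Nat.exists_eq_add_of_lt hpos
        rw [hm]
        have := Nat.find_min hex (m := m) (by omega)
        push_neg at this
        simpa [Nat.zero_add] using this
    exact Or.inr (Set.mem_iUnion.2 ⟨n, hx, Metric.mem_ball.2 hn2,
      fun hb => absurd (Metric.mem_ball.1 hb) (not_lt.2 hn1)⟩)
  -- bound on the far region plus center
  have hB0 : ∫⁻ x in (A \ Metric.ball y δ) ∪ {y}, rkernel f x y ∂μH[d]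
      ≤ ENNReal.ofReal (f δ) * μH[d] A := by
    refine le_trans (lintegral_union_le _ _ _) ?_
    have h2 : ∫⁻ x in ({y} : Set (EuclideanSpace ℝ (Fin p))), rkernel f x y ∂μH[d] = 0 :=
      setLIntegral_measure_zero _ _ ((MeasureTheory.Measure.noAtoms_hausdorff _ hd : NullSingletonClass (μH[d] : Measure (EuclideanSpace ℝ (Fin p)))).measure_singleton y)
    rw [h2, add_zero]
    calc ∫⁻ x in (A \ Metric.ball y δ), rkernel f x y ∂μH[d]
        ≤ ∫⁻ _x in (A \ Metric.ball y δ), ENNReal.ofReal (f δ) ∂μH[d] := by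
          refine setLIntegral_mono' (hAmeas.diff measurableSet_ball) fun x hx => ?_
          have hge : δ ≤ dist x y := not_lt.1 fun h => hx.2 (Metric.mem_ball.2 h)
          have hxy : x ≠ y := by
            intro h; rw [h, dist_self] at hge; linarith
          rw [rkernel, if_neg hxy]
          exact ENNReal.ofReal_le_ofReal
            (hfanti.antitoneOn (Set.mem_Ioi.2 hδ0) (Set.mem_Ioi.2 (hδ0.trans_le hge)) hge)
      _ = ENNReal.ofReal (f δ) * μH[d] (A \ Metric.ball y δ) := setLIntegral_const _ _
      _ ≤ ENNReal.ofReal (f δ) * μH[d] A := by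
          gcongr
          exact Set.diff_subset
  -- bound on each annulus
  have hBj : ∀ j : ℕ,
      ∫⁻ x in A ∩ (Metric.ball y (δ / 2 ^ j) \ Metric.ball y (δ / 2 ^ (j+1))),
        rkernel f x y ∂μH[d] ≤ ENNReal.ofReal (K * r ^ j) := by
    intro j
    have hrad0 : (0:ℝ) < δ / 2 ^ (j+1) := by positivity
    have hone : (1:ℝ) ≤ 2 ^ j := by nlinarith [pow_pos (zero_lt_two (α := ℝ)) j, pow_le_pow_right₀ (one_le_two (α := ℝ)) (Nat.zero_le j)]
    calc ∫⁻ x in A ∩ (Metric.ball y (δ / 2 ^ j) \ Metric.ball y (δ / 2 ^ (j+1))),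
          rkernel f x y ∂μH[d]
        ≤ ∫⁻ _x in A ∩ (Metric.ball y (δ / 2 ^ j) \ Metric.ball y (δ / 2 ^ (j+1))),
            ENNReal.ofReal (f (δ / 2 ^ (j+1))) ∂μH[d] := by
          refine setLIntegral_mono'
            (hAmeas.inter (measurableSet_ball.diff measurableSet_ball)) fun x hx => ?_
          have hge : δ / 2 ^ (j+1) ≤ dist x y := not_lt.1 fun h => hx.2.2 (Metric.mem_ball.2 h)
          have hxy : x ≠ y := by
            intro h; rw [h, dist_self] at hge; linarith
          rw [rkernel, if_neg hxy]
          exact ENNReal.ofReal_le_ofReal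
            (hfanti.antitoneOn (Set.mem_Ioi.2 hrad0) (Set.mem_Ioi.2 (hrad0.trans_le hge)) hge)
      _ = ENNReal.ofReal (f (δ / 2 ^ (j+1)))
            * μH[d] (A ∩ (Metric.ball y (δ / 2 ^ j) \ Metric.ball y (δ / 2 ^ (j+1)))) :=
          setLIntegral_const _ _
      _ ≤ ENNReal.ofReal (f (δ / 2 ^ (j+1))) * ENNReal.ofReal (C0 * (δ / 2 ^ j) ^ d) := by
          gcongr
          refine le_trans (measure_mono (Set.inter_subset_inter_right _ Set.diff_subset)) ?_
          refine (hAreg y hy (δ / 2 ^ j) (by positivity) ?_).2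
          exact lt_of_le_of_lt (div_le_self hδ0.le hone) hδdiam
      _ ≤ ENNReal.ofReal (K * r ^ j) := by
          rw [← ENNReal.ofReal_mul (hfpos _ (Set.mem_Ioi.2 hrad0)).le]
          exact ENNReal.ofReal_le_ofReal (key j)
  -- assembling
  calc ∫⁻ x in A, rkernel f x y ∂μH[d]
      ≤ ∫⁻ x in ((A \ Metric.ball y δ) ∪ {y})
          ∪ ⋃ j : ℕ, A ∩ (Metric.ball y (δ / 2 ^ j) \ Metric.ball y (δ / 2 ^ (j+1))),
          rkernel f x y ∂μH[d] := lintegral_mono_set hcov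
    _ ≤ (∫⁻ x in (A \ Metric.ball y δ) ∪ {y}, rkernel f x y ∂μH[d])
          + ∫⁻ x in ⋃ j : ℕ, A ∩ (Metric.ball y (δ / 2 ^ j) \ Metric.ball y (δ / 2 ^ (j+1))),
            rkernel f x y ∂μH[d] := lintegral_union_le _ _ _
    _ ≤ ENNReal.ofReal (f δ) * μH[d] A
          + ∑' j : ℕ, ∫⁻ x in A ∩ (Metric.ball y (δ / 2 ^ j) \ Metric.ball y (δ / 2 ^ (j+1))),
              rkernel f x y ∂μH[d] := add_le_add hB0 (lintegral_iUnion_le _ _)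
    _ ≤ ENNReal.ofReal (f δ) * μH[d] A + ∑' j : ℕ, ENNReal.ofReal (K * r ^ j) :=
        add_le_add le_rfl (ENNReal.tsum_le_tsum hBj)
    _ = T := by
        rw [hT]
        congr 1
        rw [← ENNReal.tsum_geometric, ← ENNReal.tsum_mul_left]
        congr 1
        funext j
        rw [ENNReal.ofReal_mul hK0.le, ENNReal.ofReal_pow hr0.le]
end
end

section
/- Let A ⊂ ℝ^p be a compact d-regular set and f a d-Riesz-like function. If (ν_N) is a sequence of finite positive Borel measures on A converging weak-star to ν, then liminf_N P_f(ν_N) ≥ P_f(ν), where P_f(μ) := inf_{y∈A} U_f^μ(y). -/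
open MeasureTheory Metric Set Filter Topology ENNReal
open scoped Classical

noncomputable section

section aux

variable {p : ℕ} {d : ℝ} {f : ℝ → ℝ}

lemma RL_anti (hf : RieszLike d f) {s t : ℝ} (hs : 0 < s) (hst : s ≤ t) : f t ≤ f s :=
  hf.2.1.antitoneOn (mem_Ioi.2 hs) (mem_Ioi.2 (lt_of_lt_of_le hs hst)) hst

lemma cont_aux (hf : RieszLike d f) (y : EuclideanSpace ℝ (Fin p)) {ε : ℝ} (hε : 0 < ε) :
    Continuous (fun x : EuclideanSpace ℝ (Fin p) => f (dist x y + ε)) := by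
  apply hf.1.comp_continuous (by continuity)
  intro x
  exact mem_Ioi.2 (lt_of_lt_of_le hε (le_add_of_nonneg_left dist_nonneg))

lemma ofReal_le_rkernel (hf : RieszLike d f) (x y : EuclideanSpace ℝ (Fin p)) {ε : ℝ}
    (hε : 0 < ε) : ENNReal.ofReal (f (dist x y + ε)) ≤ rkernel f x y := by
  unfold rkernel
  split_ifs with h
  · subst h
    simp only [dist_self, zero_add]
    exact le_iSup (fun t : {t : ℝ // 0 < t} => ENNReal.ofReal (f t.1)) ⟨ε, hε⟩
  · exact ENNReal.ofReal_le_ofReal (RL_anti hf (dist_pos.2 h) (le_add_of_nonneg_right hε.le))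

lemma integrable_aux (hf : RieszLike d f) (μ : Measure (EuclideanSpace ℝ (Fin p)))
    [IsFiniteMeasure μ] (y : EuclideanSpace ℝ (Fin p)) {ε : ℝ} (hε : 0 < ε) :
    Integrable (fun x => f (dist x y + ε)) μ := by
  refine Integrable.mono' (integrable_const (f ε)) ((cont_aux hf y hε).aestronglyMeasurable) ?_
  filter_upwards with x
  rw [Real.norm_eq_abs, abs_of_pos (hf.2.2.1 _ (mem_Ioi.2 (lt_of_lt_of_le hε (le_add_of_nonneg_left dist_nonneg))))]
  exact RL_anti hf hε (le_add_of_nonneg_left dist_nonneg)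

lemma potential_le_iSup (hf : RieszLike d f) (μ : Measure (EuclideanSpace ℝ (Fin p)))
    (y : EuclideanSpace ℝ (Fin p)) :
    potential f μ y ≤ ⨆ n : ℕ, ∫⁻ x, ENNReal.ofReal (f (dist x y + 1 / (n + 1))) ∂μ := by
  have hmeas : ∀ n : ℕ, Measurable
      (fun x : EuclideanSpace ℝ (Fin p) => ENNReal.ofReal (f (dist x y + 1 / (n + 1)))) := by
    intro n
    exact (cont_aux hf y (by positivity)).measurable.ennreal_ofReal
  have hmono : Monotone (fun n : ℕ =>
      (fun x : EuclideanSpace ℝ (Fin p) => ENNReal.ofReal (f (dist x y + 1 / (n + 1))))) := by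
    intro n m hnm x
    refine ENNReal.ofReal_le_ofReal (RL_anti hf (by positivity) ?_)
    have : (1 : ℝ) / (m + 1) ≤ 1 / (n + 1) := by
      apply one_div_le_one_div_of_le (by positivity)
      exact_mod_cast Nat.add_le_add_right hnm 1
    linarith
  have hpt : ∀ x, rkernel f x y ≤ ⨆ n : ℕ, ENNReal.ofReal (f (dist x y + 1 / (n + 1))) := by
    intro x
    unfold rkernel
    split_ifs with h
    · subst h
      apply iSup_le
      rintro ⟨t, ht⟩
      obtain ⟨n, hn⟩ := exists_nat_one_div_lt ht
      refine le_trans ?_ (le_iSup _ n)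
      simp only [dist_self, zero_add]
      exact ENNReal.ofReal_le_ofReal (RL_anti hf (by positivity) hn.le)
    · have hdx : 0 < dist x y := dist_pos.2 h
      have htend : Tendsto (fun n : ℕ => ENNReal.ofReal (f (dist x y + 1 / (n + 1)))) atTop
          (𝓝 (ENNReal.ofReal (f (dist x y)))) := by
        apply (ENNReal.continuous_ofReal.tendsto _).comp
        have hc : ContinuousAt f (dist x y) :=
          hf.1.continuousAt (Ioi_mem_nhds hdx)
        apply hc.tendsto.comp
        have : Tendsto (fun n : ℕ => dist x y + 1 / (n + 1)) atTop (𝓝 (dist x y + 0)) :=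
          tendsto_const_nhds.add tendsto_one_div_add_atTop_nhds_zero_nat
        simpa using this
      have := tendsto_nhds_unique htend
        (tendsto_atTop_iSup (fun n m hnm => hmono hnm x))
      exact le_of_eq this
  calc potential f μ y ≤ ∫⁻ x, ⨆ n : ℕ, ENNReal.ofReal (f (dist x y + 1 / (n + 1))) ∂μ :=
        lintegral_mono hpt
    _ = ⨆ n : ℕ, ∫⁻ x, ENNReal.ofReal (f (dist x y + 1 / (n + 1))) ∂μ :=
        lintegral_iSup hmeas hmono

end aux

/-- If `ν_N → ν` weak-star on a compact `d`-regular set `A` and `f` is `d`-Riesz-like, then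
`liminf_N P_f(ν_N) ≥ P_f(ν)`, where `P_f(μ) = inf_{y ∈ A} U_f^μ(y)`. -/
theorem liminf_polar_ge (p : ℕ) (d : ℝ) (hd : 0 < d) (hdp : d ≤ p)
    (A : Set (EuclideanSpace ℝ (Fin p))) (hA : IsCompact A) (hreg : DRegular d A)
    (f : ℝ → ℝ) (hf : RieszLike d f)
    (ν : ℕ → Measure (EuclideanSpace ℝ (Fin p))) (hfin : ∀ N, IsFiniteMeasure (ν N))
    (hsupp : ∀ N, ν N Aᶜ = 0)
    (νlim : Measure (EuclideanSpace ℝ (Fin p))) [IsFiniteMeasure νlim] (hνlim : νlim Aᶜ = 0)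
    (hws : ∀ φ : EuclideanSpace ℝ (Fin p) → ℝ, Continuous φ →
      Tendsto (fun N => ∫ x, φ x ∂(ν N)) atTop (nhds (∫ x, φ x ∂νlim))) :
    polar f A νlim ≤ Filter.liminf (fun N => polar f A (ν N)) atTop := by
  rw [le_liminf_iff]
  intro c hc
  by_contra hcon
  rw [not_eventually] at hcon
  obtain ⟨φ, hφmono, hφ⟩ := extraction_of_frequently_atTop
    (hcon.mono fun n h => not_lt.1 h)
  obtain ⟨c', hcc', hc'b⟩ := exists_between hc
  have hy : ∀ k : ℕ, ∃ yk, ∃ _ : yk ∈ A, potential f (ν (φ k)) yk < c' := by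
    intro k
    have : polar f A (ν (φ k)) < c' := lt_of_le_of_lt (hφ k) hcc'
    unfold polar at this
    rw [iInf_lt_iff] at this
    obtain ⟨y, hy⟩ := this
    rw [iInf_lt_iff] at hy
    obtain ⟨hyA, hy⟩ := hy
    exact ⟨y, hyA, hy⟩
  choose yk hykA hyk using hy
  obtain ⟨ylim, hylimA, ψ, hψmono, hconv⟩ := hA.tendsto_subseq hykA
  have key : ∀ ε : ℝ, 0 < ε →
      ∫⁻ x, ENNReal.ofReal (f (dist x ylim + ε)) ∂νlim ≤ c' := by
    intro ε hε
    set F : EuclideanSpace ℝ (Fin p) → ℝ := fun x => f (dist x ylim + ε) with hF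
    have hFc : Continuous F := cont_aux hf ylim hε
    have hFnn : ∀ x, 0 ≤ F x := fun x =>
      (hf.2.2.1 _ (mem_Ioi.2 (lt_of_lt_of_le hε (le_add_of_nonneg_left dist_nonneg)))).le
    have hev : ∀ᶠ j in atTop, ∫⁻ x, ENNReal.ofReal (F x) ∂(ν (φ (ψ j))) ≤ c' := by
      have hd2 : ∀ᶠ j in atTop, dist (yk (ψ j)) ylim ≤ ε / 2 := by
        have := hconv (Metric.closedBall_mem_nhds ylim (half_pos hε))
        simpa [Metric.mem_closedBall] using this
      filter_upwards [hd2] with j hj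
      calc ∫⁻ x, ENNReal.ofReal (F x) ∂(ν (φ (ψ j)))
          ≤ ∫⁻ x, ENNReal.ofReal (f (dist x (yk (ψ j)) + ε / 2)) ∂(ν (φ (ψ j))) := by
            apply lintegral_mono
            intro x
            apply ENNReal.ofReal_le_ofReal
            apply RL_anti hf (by positivity)
            have : dist x (yk (ψ j)) ≤ dist x ylim + dist (yk (ψ j)) ylim := by
              rw [dist_comm (yk (ψ j)) ylim]
              exact dist_triangle x ylim (yk (ψ j))
            linarith
        _ ≤ potential f (ν (φ (ψ j))) (yk (ψ j)) :=
            lintegral_mono fun x => ofReal_le_rkernel hf x (yk (ψ j)) (half_pos hε)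
        _ ≤ c' := (hyk (ψ j)).le
    have htend : Tendsto (fun j => ∫⁻ x, ENNReal.ofReal (F x) ∂(ν (φ (ψ j)))) atTop
        (𝓝 (∫⁻ x, ENNReal.ofReal (F x) ∂νlim)) := by
      have heq : ∀ j : ℕ, ∫⁻ x, ENNReal.ofReal (F x) ∂(ν (φ (ψ j)))
          = ENNReal.ofReal (∫ x, F x ∂(ν (φ (ψ j)))) := by
        intro j
        haveI := hfin (φ (ψ j))
        rw [ofReal_integral_eq_lintegral_ofReal (integrable_aux hf _ ylim hε)
          (Filter.Eventually.of_forall hFnn)]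
      have heq' : ∫⁻ x, ENNReal.ofReal (F x) ∂νlim = ENNReal.ofReal (∫ x, F x ∂νlim) := by
        rw [ofReal_integral_eq_lintegral_ofReal (integrable_aux hf _ ylim hε)
          (Filter.Eventually.of_forall hFnn)]
      simp only [heq, heq']
      apply (ENNReal.continuous_ofReal.tendsto _).comp
      exact (hws F hFc).comp ((hφmono.comp hψmono).tendsto_atTop)
    exact le_of_tendsto htend hev
  have hpot : potential f νlim ylim ≤ c' := by
    refine (potential_le_iSup hf νlim ylim).trans (iSup_le fun n => key _ (by positivity))
  have hpolar : polar f A νlim ≤ c' := by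
    refine le_trans ?_ hpot
    exact biInf_le _ hylimA
  exact absurd (hpolar.trans_lt hc'b) (lt_irrefl _)
end
end

section
/- Let A ⊂ ℝ^p be compact and K : A × A → (−∞,∞] lower semicontinuous, symmetric, bounded below. Then the discrete polarization constants converge to the continuous Chebyshev constant: P_K(A,N) → T_K(A) as N → ∞, where P_K(A,N) = sup over N-point multisets ω_N ⊂ A of inf_{y∈A} (1/N) Σ_{x∈ω_N} K(x,y), and T_K(A) = sup over probability measures μ on A of inf_{y∈A} ∫ K(x,y) dμ(x). -/
open MeasureTheory Set Filter Topology ENNReal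
open scoped NNReal

noncomputable section


section Aux

variable {X : Type*} [PseudoMetricSpace X]

/-- A Lipschitz-type estimate into `ℝ≥0∞` with finite values gives continuity. -/
lemma continuous_of_ennreal_lip {f : X → ℝ≥0∞} {C : ℝ≥0∞}
    (hCt : C ≠ ∞) (hfin : ∀ x, f x ≠ ∞)
    (h : ∀ x y, f x ≤ f y + C * edist x y) : Continuous f := by
  rw [continuous_iff_continuousAt]
  intro x
  rw [ContinuousAt, ENNReal.tendsto_nhds (hfin x)]
  intro ε hε
  filter_upwards [EMetric.ball_mem_nhds x
    (show (0:ℝ≥0∞) < ε / (C + 1) from ENNReal.div_pos hε.ne' (by finiteness))]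
    with y hy
  have hy' : edist y x < ε / (C + 1) := hy
  have hd : C * edist y x ≤ ε :=
    (mul_le_mul' le_self_add hy'.le).trans ENNReal.mul_div_le
  have hd' : C * edist x y ≤ ε := by rwa [edist_comm]
  constructor
  · exact tsub_le_iff_right.2 ((h x y).trans (add_le_add le_rfl hd'))
  · exact (h y x).trans (add_le_add le_rfl hd)

variable (K : X → X → ℝ≥0∞) (A : Set X)

/-- Moreau–Yosida type approximation of `K` from below, relative to the set `A ×ˢ A`. -/
def MY (m : ℕ) (q : X × X) : ℝ≥0∞ :=
  ⨅ r ∈ A ×ˢ A, (min (K r.1 r.2) m + (m + 1) * edist q r)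

lemma MY_mono (q : X × X) : Monotone fun m => MY K A m q := by
  intro m m' hmm'
  refine le_iInf₂ fun r hr => ?_
  refine (iInf₂_le r hr).trans ?_
  gcongr <;> exact_mod_cast hmm'

lemma MY_le {q : X × X} (hq : q ∈ A ×ˢ A) (m : ℕ) : MY K A m q ≤ K q.1 q.2 := by
  refine (iInf₂_le q hq).trans ?_
  simp [min_le_left]

lemma MY_lip (m : ℕ) (q q' : X × X) :
    MY K A m q ≤ MY K A m q' + ((m : ℝ≥0∞) + 1) * edist q q' := by
  have hrhs : MY K A m q' + ((m : ℝ≥0∞) + 1) * edist q q'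
      = ⨅ r : ↥(A ×ˢ A), (min (K (r : X × X).1 (r : X × X).2) m
          + (m + 1) * edist q' r + ((m : ℝ≥0∞) + 1) * edist q q') := by
    rw [MY, iInf_subtype', ENNReal.iInf_add]
  rw [hrhs, MY, iInf_subtype']
  refine le_iInf fun r => ?_
  refine (iInf_le _ r).trans ?_
  rw [add_assoc, ← mul_add]
  gcongr
  rw [add_comm (edist q' _)]
  exact edist_triangle _ _ _

lemma MY_bound {q : X × X} {r : X × X} (hr : r ∈ A ×ˢ A) (m : ℕ) :
    MY K A m q ≤ m + ((m : ℝ≥0∞) + 1) * edist q r :=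
  (iInf₂_le r hr).trans (by gcongr; exact min_le_right _ _)

lemma MY_ne_top {q : X × X} (hne : (A ×ˢ A).Nonempty) (m : ℕ) : MY K A m q ≠ ∞ := by
  obtain ⟨r, hr⟩ := hne
  refine ne_top_of_le_ne_top ?_ (MY_bound K A hr m)
  exact ENNReal.add_ne_top.2 ⟨ENNReal.natCast_ne_top m,
    ENNReal.mul_ne_top (by finiteness) (edist_ne_top _ _)⟩

lemma MY_continuous (hne : (A ×ˢ A).Nonempty) (m : ℕ) :
    Continuous (MY K A m) :=
  continuous_of_ennreal_lip (C := ((m:ℝ≥0∞) + 1)) (by finiteness)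
    (fun q => MY_ne_top K A hne m) (MY_lip K A m)

lemma iSup_MY {q : X × X} (hq : q ∈ A ×ˢ A)
    (hK : LowerSemicontinuousOn (fun r : X × X => K r.1 r.2) (A ×ˢ A)) :
    ⨆ m, MY K A m q = K q.1 q.2 := by
  refine le_antisymm (iSup_le fun m => MY_le K A hq m) ?_
  refine le_of_forall_lt fun t ht => ?_
  obtain ⟨t', htt', ht'K⟩ := exists_between ht
  have ht'ne : t' ≠ ∞ := ht'K.ne_top
  -- lower semicontinuity at q
  have hev := hK q hq t' ht'K
  rw [eventually_nhdsWithin_iff] at hev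
  obtain ⟨δ, hδpos, hδ⟩ := EMetric.mem_nhds_iff.1 hev
  obtain ⟨m₁, hm₁⟩ := ENNReal.exists_nat_gt ht'ne
  obtain ⟨m₂, hm₂⟩ := ENNReal.exists_nat_gt (r := t' / δ)
    (ENNReal.div_lt_top ht'ne hδpos.ne').ne
  have hlb : t' ≤ MY K A (m₁ + m₂) q := by
    refine le_iInf₂ fun r hr => ?_
    rcases lt_or_ge (edist r q) δ with h | h
    · have hKr : t' < K r.1 r.2 := hδ h hr
      calc t' ≤ min (K r.1 r.2) ((m₁ + m₂ : ℕ) : ℝ≥0∞) := le_min hKr.le (by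
              exact hm₁.le.trans (by exact_mod_cast Nat.le_add_right m₁ m₂))
        _ ≤ _ := le_self_add
    · have hm₂0 : (m₂ : ℝ≥0∞) ≠ 0 := (lt_of_le_of_lt zero_le hm₂).ne'
      calc t' ≤ (m₂ : ℝ≥0∞) * δ := by
            rw [← ENNReal.div_le_iff_le_mul (Or.inl hδpos.ne') (Or.inr hm₂0)]
            exact hm₂.le
        _ ≤ (((m₁ + m₂ : ℕ) : ℝ≥0∞) + 1) * edist q r := by
            rw [edist_comm q r]
            refine mul_le_mul' ?_ h
            calc (m₂ : ℝ≥0∞) ≤ ((m₁ + m₂ : ℕ) : ℝ≥0∞) := by exact_mod_cast Nat.le_add_left m₂ m₁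
              _ ≤ _ := le_self_add
        _ ≤ _ := le_add_self
  exact htt'.trans_le (hlb.trans (le_iSup (fun m => MY K A m q) (m₁ + m₂)))

end Aux

section Dini

variable {X : Type*} [PseudoMetricSpace X] {A : Set X}

lemma isClosed_sublevel {g : X → ℝ≥0∞} {C : ℝ≥0∞} (hC : C ≠ ∞)
    (hg : ∀ y y', g y ≤ g y' + C * edist y y') (hA : IsClosed A) (b : ℝ≥0∞) :
    IsClosed {y | y ∈ A ∧ g y ≤ b} := by
  refine isClosed_of_closure_subset fun y hy => ?_
  have hyA : y ∈ A := hA.closure_subset (closure_mono (fun z hz => hz.1) hy)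
  refine ⟨hyA, ENNReal.le_of_forall_pos_le_add fun ε hε _ => ?_⟩
  have hpos : (0:ℝ≥0∞) < ε / (C + 1) :=
    ENNReal.div_pos (by exact_mod_cast hε.ne') (by finiteness)
  obtain ⟨y', hy'S, hd⟩ := EMetric.mem_closure_iff.1 hy _ hpos
  calc g y ≤ g y' + C * edist y y' := hg y y'
    _ ≤ b + (C + 1) * (ε / (C + 1)) := by
        exact add_le_add hy'S.2 (mul_le_mul' le_self_add hd.le)
    _ ≤ b + ε := add_le_add le_rfl ENNReal.mul_div_le

lemma dini_ennreal {g : ℕ → X → ℝ≥0∞} {b : ℝ≥0∞} (hA : IsCompact A)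
    (hmono : ∀ y, Monotone fun m => g m y)
    (hclosed : ∀ m, IsClosed {y | y ∈ A ∧ g m y ≤ b})
    (hlt : ∀ y ∈ A, b < ⨆ m, g m y) :
    ∃ m, ∀ y ∈ A, b < g m y := by
  have hempty : (A ∩ ⋂ m, {y | y ∈ A ∧ g m y ≤ b}) = ∅ := by
    rw [eq_empty_iff_forall_notMem]
    rintro y ⟨hyA, hy⟩
    simp only [mem_iInter, mem_setOf_eq] at hy
    exact absurd (iSup_le fun m => (hy m).2) (not_le.2 (hlt y hyA))
  obtain ⟨m, hm⟩ := hA.elim_directed_family_closed _ hclosed hempty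
    (fun m m' => ⟨max m m', fun y hy => ⟨hy.1, (hmono y (le_max_left m m')).trans hy.2⟩,
      fun y hy => ⟨hy.1, (hmono y (le_max_right m m')).trans hy.2⟩⟩)
  refine ⟨m, fun y hyA => ?_⟩
  by_contra hle
  exact (eq_empty_iff_forall_notMem.1 hm y) ⟨hyA, hyA, not_lt.1 hle⟩

end Dini

section Meas

variable {X : Type*} [MeasurableSpace X] [MetricSpace X] [BorelSpace X]

lemma lintegral_countingMeasure {N : ℕ} (ω : Fin N → X) (f : X → ℝ≥0∞) :
    ∫⁻ x, f x ∂(((N : ℝ≥0∞))⁻¹ • ∑ i, Measure.dirac (ω i))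
      = (N : ℝ≥0∞)⁻¹ * ∑ i, f (ω i) := by
  rw [lintegral_smul_measure, lintegral_finset_sum_measure]
  simp [lintegral_dirac]

lemma countingMeasure_isProb {N : ℕ} (hN : N ≠ 0) (ω : Fin N → X) :
    IsProbabilityMeasure (((N : ℝ≥0∞))⁻¹ • ∑ i, Measure.dirac (ω i)) := by
  constructor
  rw [Measure.smul_apply, Measure.finset_sum_apply]
  simp only [Measure.dirac_apply_of_mem (mem_univ _), Finset.sum_const, Finset.card_univ,
    Fintype.card_fin, nsmul_eq_mul, mul_one, smul_eq_mul]
  exact ENNReal.inv_mul_cancel (by exact_mod_cast hN) (by finiteness)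

lemma countingMeasure_compl {N : ℕ} {A : Set X} (hA : MeasurableSet A)
    (ω : Fin N → X) (hω : ∀ i, ω i ∈ A) :
    (((N : ℝ≥0∞))⁻¹ • ∑ i, Measure.dirac (ω i)) Aᶜ = 0 := by
  rw [Measure.smul_apply, Measure.finset_sum_apply]
  have : ∀ i, Measure.dirac (ω i) Aᶜ = 0 := fun i => by
    rw [Measure.dirac_apply' _ hA.compl]
    simp [hω i]
  simp [this]

/-- listing a multiset with multiplicities `k j` as a function on `Fin N` -/
lemma exists_listing {J N : ℕ} (k : Fin J → ℕ) (hk : ∑ j, k j = N) (z : Fin J → X) :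
    ∃ ω : Fin N → X, (∀ i, ∃ j, ω i = z j) ∧
      ∀ f : X → ℝ≥0∞, ∑ i, f (ω i) = ∑ j, (k j : ℝ≥0∞) * f (z j) := by
  have hcard : Fintype.card (Σ j : Fin J, Fin (k j)) = N := by
    simp [Fintype.card_sigma, hk]
  let e := Fintype.equivFinOfCardEq hcard
  refine ⟨fun i => z (e.symm i).1, fun i => ⟨(e.symm i).1, rfl⟩, fun f => ?_⟩
  calc ∑ i, f (z (e.symm i).1) = ∑ σ : Σ j : Fin J, Fin (k j), f (z σ.1) :=
        Equiv.sum_comp e.symm (fun σ => f (z σ.1))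
    _ = ∑ j, (k j : ℝ≥0∞) * f (z j) := by
        rw [← Finset.univ_sigma_univ, Finset.sum_sigma]
        simp [Finset.sum_const, mul_comm]

end Meas

section Part

variable {X : Type*} [MeasurableSpace X] [MetricSpace X] [BorelSpace X]

lemma exists_partition {A : Set X} (hA : IsCompact A) {δ : ℝ} (hδ : 0 < δ) :
    ∃ (J : ℕ) (z : Fin J → X) (E : Fin J → Set X), (∀ j, z j ∈ A) ∧
      (∀ j, MeasurableSet (E j)) ∧ Pairwise (Function.onFun Disjoint E) ∧
      (⋃ j, E j) = A ∧ ∀ j, ∀ x ∈ E j, dist x (z j) < δ := by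
  have hcov : A ⊆ ⋃ x : A, Metric.ball (x : X) δ := fun x hx =>
    mem_iUnion.2 ⟨⟨x, hx⟩, Metric.mem_ball_self hδ⟩
  obtain ⟨t, ht⟩ := hA.elim_finite_subcover (fun x : A => Metric.ball (x : X) δ)
    (fun _ => Metric.isOpen_ball) hcov
  set z : Fin t.card → X := fun j => ((t.equivFin.symm j : ↥t) : A) with hz
  set E : Fin t.card → Set X := fun j =>
    (A ∩ Metric.ball (z j) δ) \ ⋃ i ∈ {i : Fin t.card | i < j}, Metric.ball (z i) δ with hE
  refine ⟨t.card, z, E, fun j => Subtype.mem _, ?_, ?_, ?_, ?_⟩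
  · intro j
    refine MeasurableSet.diff ((hA.isClosed.measurableSet).inter Metric.isOpen_ball.measurableSet) ?_
    exact MeasurableSet.biUnion (Set.to_countable _) fun i _ => Metric.isOpen_ball.measurableSet
  · intro i j hij
    rcases hij.lt_or_gt with h | h
    · refine Set.disjoint_left.2 fun x hx hx' => ?_
      exact hx'.2 (mem_biUnion h hx.1.2)
    · refine Set.disjoint_left.2 fun x hx hx' => ?_
      exact hx.2 (mem_biUnion h hx'.1.2)
  · apply Set.Subset.antisymm
    · exact iUnion_subset fun j => fun x hx => hx.1.1
    · intro x hx
      have hx' : ∃ j, x ∈ Metric.ball (z j) δ := by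
        obtain ⟨y, hyt, hy⟩ := Set.mem_iUnion₂.1 (ht hx)
        exact ⟨t.equivFin ⟨y, hyt⟩, by simpa [hz] using hy⟩
      classical
      set S := Finset.univ.filter (fun j => x ∈ Metric.ball (z j) δ) with hS
      have hSne : S.Nonempty :=
        ⟨hx'.choose, Finset.mem_filter.2 ⟨Finset.mem_univ _, hx'.choose_spec⟩⟩
      refine mem_iUnion.2 ⟨S.min' hSne, ⟨⟨hx, ?_⟩, ?_⟩⟩
      · have := S.min'_mem hSne
        simpa [hS] using this
      · intro hmem
        obtain ⟨i, hi⟩ := mem_iUnion.1 hmem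
        simp only [mem_iUnion, exists_prop] at hi
        exact absurd (S.min'_le i (Finset.mem_filter.2 ⟨Finset.mem_univ _, hi.2⟩)) (not_le.2 hi.1)
  · intro j x hx
    exact Metric.mem_ball.1 hx.1.2

end Part

section Weights

lemma exists_nat_weights {J N : ℕ} (hN : N ≠ 0) (w : Fin J → ℝ≥0∞)
    (hfin : ∀ j, w j ≠ ∞) (hw : ∑ j, w j = 1) :
    ∃ k : Fin J → ℕ, (∑ j, k j) = N ∧
      ∀ j, w j ≤ (k j : ℝ≥0∞) / N + 1 / N := by
  classical
  have hJ : J ≠ 0 := by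
    rintro rfl
    simp at hw
  set u : Fin J → ℝ≥0 := fun j => (w j).toNNReal with hudef
  have hu : ∀ j, (u j : ℝ≥0∞) = w j := fun j => ENNReal.coe_toNNReal (hfin j)
  have hu1 : ∑ j, u j = 1 := by
    have h := hw
    rw [← ENNReal.coe_one] at h
    have : ∑ j, ((u j : ℝ≥0∞)) = ((1:ℝ≥0) : ℝ≥0∞) := by
      simpa [hu] using h
    rw [← ENNReal.coe_finset_sum] at this
    exact_mod_cast this
  haveI : NeZero J := ⟨hJ⟩
  set j₀ : Fin J := 0 with hj₀
  set S : ℕ := ∑ j ∈ Finset.univ.erase j₀, ⌊(N : ℝ≥0) * u j⌋₊ with hSdef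
  have hSle' : (S : ℝ≥0) ≤ (N : ℝ≥0) * ∑ j ∈ Finset.univ.erase j₀, u j := by
    rw [hSdef, Nat.cast_sum, Finset.mul_sum]
    exact Finset.sum_le_sum fun j _ => Nat.floor_le (by positivity)
  have herase : u j₀ + ∑ j ∈ Finset.univ.erase j₀, u j = 1 := by
    rw [Finset.add_sum_erase _ _ (Finset.mem_univ j₀)]
    exact hu1
  have hSleN : S ≤ N := by
    have h1 : (S : ℝ≥0) ≤ (N : ℝ≥0) * 1 := hSle'.trans (by
      gcongr
      calc ∑ j ∈ Finset.univ.erase j₀, u j ≤ u j₀ + ∑ j ∈ Finset.univ.erase j₀, u j :=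
            le_add_self
        _ = 1 := herase)
    rw [mul_one] at h1
    exact_mod_cast h1
  refine ⟨fun j => if j = j₀ then N - S else ⌊(N : ℝ≥0) * u j⌋₊, ?_, ?_⟩
  · rw [← Finset.add_sum_erase _ _ (Finset.mem_univ j₀)]
    simp only [if_pos rfl]
    rw [Finset.sum_congr rfl (fun j hj => if_neg (Finset.ne_of_mem_erase hj)), ← hSdef]
    exact Nat.sub_add_cancel hSleN
  · intro j
    have hNpos : (0:ℝ≥0) < (N:ℝ≥0) := by exact_mod_cast Nat.pos_of_ne_zero hN
    by_cases hj : j = j₀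
    · rw [hj]
      simp only [if_pos rfl]
      have hNc : (N:ℝ≥0) = ((N - S : ℕ) : ℝ≥0) + (S : ℝ≥0) := by
        exact_mod_cast (Nat.sub_add_cancel hSleN).symm
      have hkey : (N:ℝ≥0) * u j₀ ≤ ((N - S : ℕ) : ℝ≥0) := by
        refine le_of_add_le_add_right (a := (S:ℝ≥0)) ?_
        rw [← hNc]
        calc (N:ℝ≥0) * u j₀ + S ≤ (N:ℝ≥0) * u j₀ + (N:ℝ≥0) * ∑ i ∈ Finset.univ.erase j₀, u i :=
              add_le_add le_rfl hSle'
          _ = (N:ℝ≥0) * (u j₀ + ∑ i ∈ Finset.univ.erase j₀, u i) := by ring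
          _ = N := by rw [herase, mul_one]
      have hdiv : u j₀ ≤ ((N - S : ℕ) : ℝ≥0) / (N:ℝ≥0) := by
        rw [le_div_iff₀ hNpos, mul_comm (u j₀) ((N:ℝ≥0))]
        exact hkey
      calc w j₀ = ((u j₀ : ℝ≥0) : ℝ≥0∞) := (hu j₀).symm
        _ ≤ ((((N - S : ℕ) : ℝ≥0) / (N:ℝ≥0) : ℝ≥0) : ℝ≥0∞) := ENNReal.coe_le_coe.2 hdiv
        _ = ((N - S : ℕ) : ℝ≥0∞) / (N : ℝ≥0∞) := by
            rw [ENNReal.coe_div hNpos.ne']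
            norm_cast
        _ ≤ _ := le_self_add
    · simp only [if_neg hj]
      have hfl : (N:ℝ≥0) * u j ≤ (⌊(N : ℝ≥0) * u j⌋₊ : ℝ≥0) + 1 :=
        (Nat.lt_floor_add_one ((N : ℝ≥0) * u j)).le
      have hdiv : u j ≤ ((⌊(N : ℝ≥0) * u j⌋₊ : ℝ≥0) + 1) / (N:ℝ≥0) := by
        rw [le_div_iff₀ hNpos, mul_comm (u j) ((N:ℝ≥0))]
        exact hfl
      calc w j = ((u j : ℝ≥0) : ℝ≥0∞) := (hu j).symm
        _ ≤ ((((⌊(N : ℝ≥0) * u j⌋₊ : ℝ≥0) + 1) / (N:ℝ≥0) : ℝ≥0) : ℝ≥0∞) :=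
            ENNReal.coe_le_coe.2 hdiv
        _ = ((⌊(N : ℝ≥0) * u j⌋₊ : ℝ≥0∞) + 1) / (N : ℝ≥0∞) := by
            rw [ENNReal.coe_div hNpos.ne']
            norm_cast
        _ = _ := ENNReal.div_add_div_same.symm

end Weights


/-- The potential of `μ` with respect to a kernel `K` (values in `[0,∞]`, i.e. a kernel
bounded below after normalization). -/
def Kpotential {p : ℕ} (K : EuclideanSpace ℝ (Fin p) → EuclideanSpace ℝ (Fin p) → ℝ≥0∞)
    (μ : Measure (EuclideanSpace ℝ (Fin p))) (y : EuclideanSpace ℝ (Fin p)) : ℝ≥0∞ :=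
  ∫⁻ x, K x y ∂μ

/-- The `K`-polarization of `μ` on `A`. -/
def Kpolar {p : ℕ} (K : EuclideanSpace ℝ (Fin p) → EuclideanSpace ℝ (Fin p) → ℝ≥0∞)
    (A : Set (EuclideanSpace ℝ (Fin p))) (μ : Measure (EuclideanSpace ℝ (Fin p))) : ℝ≥0∞ :=
  ⨅ y ∈ A, Kpotential K μ y

/-- The normalized counting measure of an `N`-point multiset `ω`. -/
def counting {p : ℕ} {N : ℕ} (ω : Fin N → EuclideanSpace ℝ (Fin p)) :
    Measure (EuclideanSpace ℝ (Fin p)) :=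
  ((N : ℝ≥0∞))⁻¹ • ∑ i, Measure.dirac (ω i)

/-- The discrete `N`-th `K`-polarization (Chebyshev) constant of `A`. -/
def KchebDiscrete {p : ℕ} (K : EuclideanSpace ℝ (Fin p) → EuclideanSpace ℝ (Fin p) → ℝ≥0∞)
    (A : Set (EuclideanSpace ℝ (Fin p))) (N : ℕ) : ℝ≥0∞ :=
  ⨆ (ω : Fin N → EuclideanSpace ℝ (Fin p)) (_ : ∀ i, ω i ∈ A), Kpolar K A (counting ω)

/-- The continuous Chebyshev constant `T_K(A)`. -/
def KchebCont {p : ℕ} (K : EuclideanSpace ℝ (Fin p) → EuclideanSpace ℝ (Fin p) → ℝ≥0∞)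
    (A : Set (EuclideanSpace ℝ (Fin p))) : ℝ≥0∞ :=
  ⨆ (μ : Measure (EuclideanSpace ℝ (Fin p))) (_ : IsProbabilityMeasure μ) (_ : μ Aᶜ = 0),
    Kpolar K A μ

/-- Ohtsuka's theorem: for a compact set `A` and a lower semicontinuous symmetric kernel `K`
(bounded below), the discrete polarization constants converge to the continuous Chebyshev
constant: `P_K(A, N) → T_K(A)` as `N → ∞`. -/
theorem ohtsuka (p : ℕ) (A : Set (EuclideanSpace ℝ (Fin p))) (hA : IsCompact A)
    (hne : A.Nonempty)
    (K : EuclideanSpace ℝ (Fin p) → EuclideanSpace ℝ (Fin p) → ℝ≥0∞)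
    (hK : LowerSemicontinuousOn (fun q : EuclideanSpace ℝ (Fin p) × EuclideanSpace ℝ (Fin p) =>
      K q.1 q.2) (A ×ˢ A))
    (hsymm : ∀ x y, K x y = K y x) :
    Tendsto (fun N => KchebDiscrete K A N) atTop (nhds (KchebCont K A)) := by

  have hAmeas : MeasurableSet A := hA.isClosed.measurableSet
  have hprodne : (A ×ˢ A).Nonempty := hne.prod hne
  -- upper bound
  have hupper : ∀ N : ℕ, N ≠ 0 → KchebDiscrete K A N ≤ KchebCont K A := by
    intro N hN
    refine iSup₂_le fun ω hω => ?_
    have h1 : IsProbabilityMeasure (counting ω) := countingMeasure_isProb hN ω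
    have h2 : (counting ω) Aᶜ = 0 := countingMeasure_compl hAmeas ω hω
    exact le_iSup_of_le (counting ω) (le_iSup_of_le h1 (le_iSup_of_le h2 le_rfl))
  -- lower bound
  have hlower : ∀ a, a < KchebCont K A → ∀ᶠ N in atTop, a < KchebDiscrete K A N := by
    intro a ha
    rw [KchebCont, lt_iSup_iff] at ha
    obtain ⟨μ, ha⟩ := ha
    rw [lt_iSup_iff] at ha
    obtain ⟨hμprob, ha⟩ := ha
    rw [lt_iSup_iff] at ha
    obtain ⟨hμA, ha⟩ := ha
    haveI := hμprob
    have haA : a ≠ ∞ := ha.ne_top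
    obtain ⟨b, hab, hbK⟩ := exists_between ha
    have hbne : b ≠ ⊤ := hbK.ne_top
    set ε := (b - a) / 4 with hεdef
    have hεpos : 0 < ε := ENNReal.div_pos (tsub_pos_of_lt hab).ne' (by norm_num)
    have hεne : ε ≠ ⊤ :=
      (ENNReal.div_lt_top (ne_top_of_le_ne_top hbne tsub_le_self) (by norm_num)).ne
    have hμae : ∀ᵐ x ∂μ, x ∈ A := by
      rw [ae_iff]
      exact hμA
    set g : ℕ → EuclideanSpace ℝ (Fin p) → ℝ≥0∞ :=
      fun m y => ∫⁻ x, MY K A m (x, y) ∂μ with hgdef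
    have hmono : ∀ y, Monotone fun m => g m y := fun y m m' h =>
      lintegral_mono fun x => MY_mono K A _ h
    have hmeas : ∀ (m : ℕ) y, Measurable fun x : EuclideanSpace ℝ (Fin p) => MY K A m (x, y) :=
      fun m y => ((MY_continuous K A hprodne m).comp
        (continuous_id.prodMk continuous_const)).measurable
    have hsup : ∀ y ∈ A, b < ⨆ m, g m y := by
      intro y hy
      have hgy : (⨆ m, g m y) = Kpotential K μ y := by
        rw [hgdef]
        rw [← lintegral_iSup (fun m => hmeas m y)
          (fun m m' h => fun x => MY_mono K A _ h)]
        refine lintegral_congr_ae ?_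
        filter_upwards [hμae] with x hx
        exact iSup_MY K A (mk_mem_prod hx hy) hK
      rw [hgy]
      exact lt_of_lt_of_le hbK (iInf₂_le y hy)
    have hlip : ∀ (m : ℕ) y y', g m y ≤ g m y' + ((m : ℝ≥0∞) + 1) * edist y y' := by
      intro m y y'
      calc g m y ≤ ∫⁻ x, (MY K A m (x, y') + ((m : ℝ≥0∞) + 1) * edist y y') ∂μ := by
            refine lintegral_mono fun x => ?_
            refine (MY_lip K A m (x, y) (x, y')).trans ?_
            gcongr
            simp [Prod.edist_eq]
        _ = g m y' + ((m : ℝ≥0∞) + 1) * edist y y' := by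
            rw [lintegral_add_right _ measurable_const, lintegral_const, measure_univ, mul_one]
    have hclosed : ∀ m : ℕ, IsClosed {y | y ∈ A ∧ g m y ≤ b} := fun m =>
      isClosed_sublevel (C := (m : ℝ≥0∞) + 1) (by finiteness) (hlip m) hA.isClosed b
    obtain ⟨m, hm⟩ := dini_ennreal hA hmono hclosed hsup
    -- partition
    set δ : ℝ := (ε / ((m : ℝ≥0∞) + 1)).toReal with hδdef
    have hδquot_ne : ε / ((m : ℝ≥0∞) + 1) ≠ ⊤ := by
      exact (ENNReal.div_lt_top hεne (by simp)).ne
    have hδpos : 0 < δ :=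
      ENNReal.toReal_pos (ENNReal.div_pos hεpos.ne' (by finiteness)).ne' hδquot_ne
    obtain ⟨J, z, E, hzA, hEmeas, hEdisj, hEunion, hEdist⟩ := exists_partition hA hδpos
    set w : Fin J → ℝ≥0∞ := fun j => μ (E j) with hwdef
    have hwfin : ∀ j, w j ≠ ∞ := fun j => (measure_lt_top μ _).ne
    have hmuA : μ A = 1 := by
      have h := measure_add_measure_compl (μ := μ) hAmeas
      rw [hμA, add_zero, measure_univ] at h
      exact h
    have hwsum : ∑ j, w j = 1 := by
      have h := measure_iUnion hEdisj hEmeas (μ := μ)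
      rw [hEunion, tsum_fintype] at h
      rw [← h, hmuA]
    -- middle bound
    have hmyd : ∀ j, ∀ x ∈ E j, ∀ y : EuclideanSpace ℝ (Fin p),
        MY K A m (x, y) ≤ MY K A m (z j, y) + ε := by
      intro j x hx y
      refine (MY_lip K A m (x, y) (z j, y)).trans ?_
      gcongr
      have hdist : edist (x, y) (z j, y) ≤ ENNReal.ofReal δ := by
        rw [Prod.edist_eq]
        simp only [edist_self, max_le_iff]
        constructor
        · rw [edist_dist]
          exact ENNReal.ofReal_le_ofReal (hEdist j x hx).le
        · exact zero_le
      calc ((m : ℝ≥0∞) + 1) * edist (x, y) (z j, y) ≤ ((m : ℝ≥0∞) + 1) * ENNReal.ofReal δ := by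
            gcongr
        _ = ((m : ℝ≥0∞) + 1) * (ε / ((m : ℝ≥0∞) + 1)) := by
            rw [hδdef, ENNReal.ofReal_toReal hδquot_ne]
        _ ≤ ε := ENNReal.mul_div_le
    have hmid : ∀ y ∈ A, g m y ≤ (∑ j, w j * MY K A m (z j, y)) + ε := by
      intro y hy
      have hrestrict : μ.restrict (⋃ j, E j) = μ := by
        rw [hEunion]
        exact Measure.restrict_eq_self_of_ae_mem hμae
      calc g m y = ∫⁻ x in (⋃ j, E j), MY K A m (x, y) ∂μ := by rw [hrestrict]
        _ = ∑' j, ∫⁻ x in E j, MY K A m (x, y) ∂μ := lintegral_iUnion hEmeas hEdisj _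
        _ = ∑ j, ∫⁻ x in E j, MY K A m (x, y) ∂μ := tsum_fintype _
        _ ≤ ∑ j, (w j * MY K A m (z j, y) + ε * w j) := by
            refine Finset.sum_le_sum fun j _ => ?_
            calc ∫⁻ x in E j, MY K A m (x, y) ∂μ
                ≤ ∫⁻ _ in E j, (MY K A m (z j, y) + ε) ∂μ :=
                  setLIntegral_mono' (hEmeas j) fun x hx => hmyd j x hx y
              _ = (MY K A m (z j, y) + ε) * w j := setLIntegral_const _ _
              _ = w j * MY K A m (z j, y) + ε * w j := by ring
        _ = (∑ j, w j * MY K A m (z j, y)) + ε := by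
            rw [Finset.sum_add_distrib, ← Finset.mul_sum, hwsum, mul_one]
    -- uniform bound B on MY over A × A
    have hD : EMetric.diam A ≠ ⊤ := hA.isBounded.ediam_ne_top
    set B : ℝ≥0∞ := (m : ℝ≥0∞) + ((m : ℝ≥0∞) + 1) * EMetric.diam A with hBdef
    have hBne : B ≠ ⊤ := by finiteness
    have hMYB : ∀ (j : Fin J), ∀ y ∈ A, MY K A m (z j, y) ≤ B := by
      intro j y hy
      refine (MY_bound K A (r := (z j, z j)) (mk_mem_prod (hzA j) (hzA j)) m).trans ?_
      rw [hBdef]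
      gcongr
      rw [Prod.edist_eq]
      simp only [edist_self, max_le_iff]
      exact ⟨zero_le, EMetric.edist_le_diam_of_mem hy (hzA j)⟩
    obtain ⟨N₀, hN₀⟩ := ENNReal.exists_nat_gt
      (show (J : ℝ≥0∞) * B / ε ≠ ⊤ from (ENNReal.div_lt_top (by finiteness) hεpos.ne').ne)
    filter_upwards [eventually_ge_atTop (max N₀ 1)] with N hN
    have hN1 : N ≠ 0 := by
      have := le_trans (le_max_right N₀ 1) hN
      omega
    have hJBN : (J : ℝ≥0∞) * B / N ≤ ε := by
      have h1 : (J : ℝ≥0∞) * B ≤ (N : ℝ≥0∞) * ε := by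
        have h2 : (J : ℝ≥0∞) * B / ε ≤ (N : ℝ≥0∞) :=
          hN₀.le.trans (by exact_mod_cast le_trans (le_max_left N₀ 1) hN)
        rw [ENNReal.div_le_iff_le_mul (Or.inl hεpos.ne') (Or.inl hεne)] at h2
        exact h2
      rw [ENNReal.div_le_iff_le_mul (Or.inl (by exact_mod_cast hN1)) (Or.inl (by finiteness))]
      rwa [mul_comm ε ((N:ℝ≥0∞))]
    obtain ⟨k, hksum, hk⟩ := exists_nat_weights hN1 w hwfin hwsum
    obtain ⟨ω, hωmem, hωsum⟩ := exists_listing k hksum z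
    have hωA : ∀ i, ω i ∈ A := fun i => by
      obtain ⟨j, hj⟩ := hωmem i
      rw [hj]; exact hzA j
    -- the potential of the counting measure
    have hpot : ∀ y ∈ A, (∑ j, ((k j : ℝ≥0∞) / N) * MY K A m (z j, y))
        ≤ Kpotential K (counting ω) y := by
      intro y hy
      have hcount : Kpotential K (counting ω) y = (N : ℝ≥0∞)⁻¹ * ∑ i, K (ω i) y :=
        lintegral_countingMeasure ω (fun x => K x y)
      rw [hcount]
      have hMYle : (∑ i, MY K A m (ω i, y)) ≤ ∑ i, K (ω i) y :=
        Finset.sum_le_sum fun i _ => MY_le K A (mk_mem_prod (hωA i) hy) m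
      calc (∑ j, ((k j : ℝ≥0∞) / N) * MY K A m (z j, y))
          = (N : ℝ≥0∞)⁻¹ * ∑ j, (k j : ℝ≥0∞) * MY K A m (z j, y) := by
            rw [Finset.mul_sum]
            refine Finset.sum_congr rfl fun j _ => ?_
            rw [ENNReal.div_eq_inv_mul, mul_assoc]
        _ = (N : ℝ≥0∞)⁻¹ * ∑ i, MY K A m (ω i, y) := by
            rw [hωsum (fun x => MY K A m (x, y))]
        _ ≤ (N : ℝ≥0∞)⁻¹ * ∑ i, K (ω i) y := by gcongr
    -- final chain
    have hfinal : ∀ y ∈ A, b ≤ Kpotential K (counting ω) y + ε + ε := by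
      intro y hy
      have h1 : b ≤ (∑ j, w j * MY K A m (z j, y)) + ε := (hm y hy).le.trans (hmid y hy)
      have h2 : (∑ j, w j * MY K A m (z j, y))
          ≤ (∑ j, ((k j : ℝ≥0∞) / N) * MY K A m (z j, y)) + ε := by
        calc (∑ j, w j * MY K A m (z j, y))
            ≤ ∑ j, (((k j : ℝ≥0∞) / N) + 1 / N) * MY K A m (z j, y) := by
              refine Finset.sum_le_sum fun j _ => ?_
              gcongr
              exact hk j
          _ = (∑ j, ((k j : ℝ≥0∞) / N) * MY K A m (z j, y))
              + ∑ j, (1 / N) * MY K A m (z j, y) := by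
              rw [← Finset.sum_add_distrib]
              refine Finset.sum_congr rfl fun j _ => ?_
              ring
          _ ≤ (∑ j, ((k j : ℝ≥0∞) / N) * MY K A m (z j, y)) + ε := by
              gcongr
              calc ∑ j, (1 / (N:ℝ≥0∞)) * MY K A m (z j, y)
                  ≤ ∑ _j : Fin J, (1 / (N:ℝ≥0∞)) * B := by
                    refine Finset.sum_le_sum fun j _ => ?_
                    gcongr
                    exact hMYB j y hy
                _ = (J : ℝ≥0∞) * B / N := by
                    rw [Finset.sum_const, Finset.card_univ, Fintype.card_fin, nsmul_eq_mul,
                      one_div, ENNReal.div_eq_inv_mul]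
                    ring
                _ ≤ ε := hJBN
      calc b ≤ (∑ j, w j * MY K A m (z j, y)) + ε := h1
        _ ≤ ((∑ j, ((k j : ℝ≥0∞) / N) * MY K A m (z j, y)) + ε) + ε := by gcongr
        _ ≤ Kpotential K (counting ω) y + ε + ε := by gcongr; exact hpot y hy
    -- conclude
    have hpolar : b ≤ Kpolar K A (counting ω) + (ε + ε) := by
      have : b ≤ ⨅ y ∈ A, (Kpotential K (counting ω) y + (ε + ε)) := by
        refine le_iInf₂ fun y hy => ?_
        calc b ≤ Kpotential K (counting ω) y + ε + ε := hfinal y hy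
          _ = Kpotential K (counting ω) y + (ε + ε) := by ring
      refine this.trans ?_
      rw [Kpolar, iInf_subtype', iInf_subtype', ENNReal.iInf_add]
    have hc : a + ((ε + ε) + (ε + ε)) = b := by
      have h4 : (ε + ε) + (ε + ε) = b - a := by
        rw [hεdef]
        rw [show ((b - a) / 4 + (b - a) / 4) + ((b - a) / 4 + (b - a) / 4)
          = 4 * ((b - a) / 4) by ring]
        rw [ENNReal.mul_div_cancel' (by norm_num) (by norm_num)]
      rw [h4, add_tsub_cancel_of_le hab.le]
    have hstep : a + (ε + ε) ≤ Kpolar K A (counting ω) := by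
      rw [← ENNReal.add_le_add_iff_right (show (ε + ε) ≠ ⊤ by finiteness)]
      calc a + (ε + ε) + (ε + ε) = b := by rw [← hc]; ring
        _ ≤ Kpolar K A (counting ω) + (ε + ε) := hpolar
    have haK : a < Kpolar K A (counting ω) :=
      lt_of_lt_of_le (ENNReal.lt_add_right haA (hεpos.trans_le le_self_add).ne') hstep
    exact lt_of_lt_of_le haK
      (le_iSup₂ (f := fun (ω' : Fin N → EuclideanSpace ℝ (Fin p))
        (_ : ∀ i, ω' i ∈ A) => Kpolar K A (counting ω')) ω hωA)
  -- combine
  rw [tendsto_order]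
  constructor
  · intro a ha
    exact hlower a ha
  · intro a ha
    filter_upwards [eventually_ge_atTop 1] with N hN
    exact lt_of_le_of_lt (hupper N (by omega)) ha
end
end
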